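/- arXiv:1010.0821 — 6 statements merged into one kernel-verified Lean document; each statement's English description precedes it below -/
import Mathlib

section
/- Let g be a finite-dimensional Lie algebra over an algebraically closed field K of characteristic 0. Then g admits a very nilpotent basis if and only if g is a nilpotent Lie algebra. -/
/-- The set of iterated brackets of the family `y`: the smallest subset of `g`
containing the `y i` and closed under the Lie bracket. -/
inductive IsIterBracket {g : Type*} [LieRing g] {n : ℕ} (y : Fin n → g) : g → Prop
  | base (i : Fin n) : IsIterBracket y (y i)
  | bracket {u v : g} : IsIterBracket y u → IsIterBracket y v → IsIterBracket y ⁅u, v⁆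

open Module LieModule

section Helpers

variable {K : Type*} [Field K]

/-- Closure of a set under Lie brackets. -/
inductive BrkCl {g : Type*} [LieRing g] (T : Set g) : g → Prop
  | base {x : g} : x ∈ T → BrkCl T x
  | bracket {u v : g} : BrkCl T u → BrkCl T v → BrkCl T ⁅u, v⁆

lemma isNilpotent_of_forall_exists_pow_eq_zero {M : Type*} [AddCommGroup M] [Module K M]
    [FiniteDimensional K M] (f : Module.End K M) (h : ∀ m : M, ∃ k : ℕ, (f ^ k) m = 0) :
    IsNilpotent f := by
  let b := Module.finBasis K M
  choose k hk using h
  refine ⟨Finset.univ.sup fun i => k (b i), ?_⟩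
  apply Module.Basis.ext b
  intro i
  have hle : k (b i) ≤ Finset.univ.sup fun i => k (b i) :=
    Finset.le_sup (f := fun i => k (b i)) (Finset.mem_univ i)
  have : (Finset.univ.sup fun i => k (b i)) = (Finset.univ.sup fun i => k (b i)) - k (b i) + k (b i) :=
    (Nat.sub_add_cancel hle).symm
  rw [this, pow_add, Module.End.mul_apply, hk, map_zero, LinearMap.zero_apply]

variable {g : Type*} [LieRing g] [LieAlgebra K g]

lemma toEnd_subalgebra {M : Type*} [AddCommGroup M] [Module K M]
    [LieRingModule g M] [LieModule K g M] (H : LieSubalgebra K g) (x : H) :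
    toEnd K H M x = toEnd K g M (x : g) := by
  ext m
  simp only [toEnd_apply_apply]
  exact LieSubalgebra.coe_bracket_of_module H x m

lemma coe_ad_pow (H : LieSubalgebra K g) (x y : H) (n : ℕ) :
    (((LieAlgebra.ad K H x) ^ n) y : g) = ((LieAlgebra.ad K g (x : g)) ^ n) (y : g) := by
  induction n with
  | zero => rfl
  | succ n ih =>
    rw [pow_succ', pow_succ', Module.End.mul_apply, Module.End.mul_apply,
      LieAlgebra.ad_apply, LieAlgebra.ad_apply, LieSubalgebra.coe_bracket, ih]

lemma ad_subalgebra_nilpotent (H : LieSubalgebra K g) (x : H)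
    (h : IsNilpotent (LieAlgebra.ad K g (x : g))) :
    IsNilpotent (LieAlgebra.ad K H x) := by
  obtain ⟨n, hn⟩ := h
  refine ⟨n, ?_⟩
  ext y
  have := coe_ad_pow H x y n
  rw [hn] at this
  simpa using this

lemma lie_mem_span_of_closed {S : Set g}
    (h : ∀ u ∈ S, ∀ v ∈ S, ⁅u, v⁆ ∈ S) {x y : g}
    (hx : x ∈ Submodule.span K S) (hy : y ∈ Submodule.span K S) :
    ⁅x, y⁆ ∈ Submodule.span K S := by
  induction hx using Submodule.span_induction with
  | mem u hu =>
    induction hy using Submodule.span_induction with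
    | mem v hv => exact Submodule.subset_span (h u hu v hv)
    | zero => simp
    | add a c _ _ ha hc => rw [lie_add]; exact add_mem ha hc
    | smul t a _ ha => rw [lie_smul]; exact Submodule.smul_mem _ t ha
  | zero => simp
  | add a c _ _ ha hc => rw [add_lie]; exact add_mem ha hc
  | smul t a _ ha => rw [smul_lie]; exact Submodule.smul_mem _ t ha

end Helpers



section LemX

variable {K : Type*} [Field K]
variable {g : Type*} [LieRing g] [LieAlgebra K g]


theorem lemX (M : Type*) [AddCommGroup M] [Module K M] [LieRingModule g M] [LieModule K g M]
    [FiniteDimensional K M]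
    (b : LieSubalgebra K g) (hid : ∀ x : g, ∀ v ∈ b, ⁅x, v⁆ ∈ b) (z : g)
    (hsp : ∀ x : g, ∃ v ∈ b, ∃ c : K, x = v + c • z)
    (hb : ∀ v ∈ b, IsNilpotent (toEnd K g M v))
    (hz : IsNilpotent (toEnd K g M z)) :
    ∀ x : g, IsNilpotent (toEnd K g M x) := by
  rcases subsingleton_or_nontrivial M with hM | hM
  · exact fun x => ⟨1, by ext m; exact Subsingleton.elim _ _⟩
  -- the common kernel of b
  let M0 : LieSubmodule K g M :=
    { carrier := {m | ∀ v ∈ b, ⁅v, m⁆ = 0}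
      add_mem' := fun ha hc v hv => by
        rw [lie_add, ha v hv, hc v hv, add_zero]
      zero_mem' := fun v hv => lie_zero v
      smul_mem' := fun t m hm v hv => by rw [lie_smul, hm v hv, smul_zero]
      lie_mem := by
        intro y m hm v hv
        have h1 : ⁅v, y⁆ ∈ b := by
          rw [← lie_skew]
          exact neg_mem (hid y v hv)
        have : ⁅v, ⁅y, m⁆⁆ = ⁅⁅v, y⁆, m⁆ + ⁅y, ⁅v, m⁆⁆ := leibniz_lie v y m
        rw [this, hm v hv, lie_zero, add_zero, hm _ h1] }
  have hM0mem : ∀ m : M, m ∈ M0 ↔ ∀ v ∈ b, ⁅v, m⁆ = 0 := fun m => Iff.rfl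
  -- M0 is nonzero
  haveI : LieModule.IsNilpotent b M := by
    rw [LieModule.isNilpotent_iff_forall' (R := K)]
    intro v
    rw [toEnd_subalgebra]
    exact hb v v.2
  have hM0ne : M0 ≠ ⊥ := by
    haveI := LieModule.nontrivial_max_triv_of_isNilpotent K b M
    obtain ⟨m0, hm0⟩ := exists_ne (0 : maxTrivSubmodule K b M)
    intro hbot
    apply hm0
    have hmem : (m0 : M) ∈ M0 := by
      rw [hM0mem]
      intro v hv
      have := ((mem_maxTrivSubmodule K b M m0).mp m0.2) ⟨v, hv⟩
      rwa [LieSubalgebra.coe_bracket_of_module] at this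
    rw [hbot] at hmem
    ext
    simpa using hmem
  -- pass to the quotient
  have key : ∀ (y : g) (k : ℕ) (m : M),
      ((toEnd K g (M ⧸ M0) y) ^ k) (LieSubmodule.Quotient.mk' M0 m) =
        LieSubmodule.Quotient.mk' M0 (((toEnd K g M y) ^ k) m) := by
    intro y k
    induction k with
    | zero => intro m; rfl
    | succ k ih =>
      intro m
      rw [pow_succ', pow_succ', Module.End.mul_apply, Module.End.mul_apply, ih]
      rfl
  have hQnil : ∀ y : g, IsNilpotent (toEnd K g M y) → IsNilpotent (toEnd K g (M ⧸ M0) y) := by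
    rintro y ⟨n, hn⟩
    refine ⟨n, ?_⟩
    ext q
    obtain ⟨m, rfl⟩ := LieSubmodule.Quotient.surjective_mk' M0 q
    rw [key, hn]
    simp
  have hfr : finrank K (M ⧸ M0) < finrank K M := by
    have h1 : finrank K (M ⧸ M0) + finrank K M0.toSubmodule = finrank K M :=
      Submodule.finrank_quotient_add_finrank M0.toSubmodule
    have h2 : 0 < finrank K M0.toSubmodule := by
      haveI : Nontrivial M0 := (LieSubmodule.nontrivial_iff_ne_bot K g M).mpr hM0ne
      exact Module.finrank_pos_iff.mpr this
    omega
  have hQ := lemX (M ⧸ M0) b hid z hsp (fun v hv => hQnil v (hb v hv)) (hQnil z hz)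
  -- combine
  intro x
  obtain ⟨v, hv, c, rfl⟩ := hsp x
  obtain ⟨a, ha⟩ := hQ (v + c • z)
  obtain ⟨n, hn⟩ := hz
  have hsubM0 : ∀ m : M, ((toEnd K g M (v + c • z)) ^ a) m ∈ M0 := by
    intro m
    have : LieSubmodule.Quotient.mk' M0 (((toEnd K g M (v + c • z)) ^ a) m) = 0 := by
      rw [← key, ha]
      simp
    rwa [LieSubmodule.Quotient.mk_eq_zero] at this
  have hstep : ∀ (k : ℕ) (m : M), m ∈ M0 →
      ((toEnd K g M (v + c • z)) ^ k) m = c ^ k • ((toEnd K g M z) ^ k) m := by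
    intro k
    induction k with
    | zero => intro m _; simp
    | succ k ih =>
      intro m hm
      have hzm : ⁅z, m⁆ ∈ M0 := M0.lie_mem hm
      have h1 : toEnd K g M (v + c • z) m = c • ⁅z, m⁆ := by
        rw [toEnd_apply_apply, add_lie, smul_lie, hm v hv, zero_add]
      have h2 : ((toEnd K g M z) ^ (k + 1)) m = ((toEnd K g M z) ^ k) ⁅z, m⁆ := by
        rw [pow_succ, Module.End.mul_apply, toEnd_apply_apply]
      rw [pow_succ, Module.End.mul_apply, h1, map_smul, ih _ hzm, smul_smul, h2, ← pow_succ']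
  refine ⟨n + a, ?_⟩
  ext m
  rw [pow_add, Module.End.mul_apply, hstep n _ (hsubM0 m), hn]
  simp
termination_by finrank K M
decreasing_by exact hfr

end LemX



section MainAux

universe u

variable {K : Type*} [Field K] [IsAlgClosed K] [CharZero K]


theorem main_aux (g : Type u) [LieRing g] [LieAlgebra K g] [FiniteDimensional K g]
    (S : Set g)
    (hcl : ∀ u ∈ S, ∀ v ∈ S, ⁅u, v⁆ ∈ S)
    (hnil : ∀ z ∈ S, IsNilpotent (LieAlgebra.ad K g z))
    (hspan : Submodule.span K S = ⊤) :
    LieRing.IsNilpotent g := by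
  rcases subsingleton_or_nontrivial g with hg | hg
  · exact ⟨⟨0, by ext x; simp [Subsingleton.elim x 0]⟩⟩
  -- family of proper subalgebras spanned by closed subsets of S
  set P : Set ℕ := {d | ∃ S' : Set g, S' ⊆ S ∧ (∀ u ∈ S', ∀ v ∈ S', ⁅u, v⁆ ∈ S') ∧
    Submodule.span K S' ≠ ⊤ ∧ finrank K (Submodule.span K S') = d} with hP
  have hPne : P.Nonempty := by
    refine ⟨finrank K (Submodule.span K (∅ : Set g)), ∅, by simp, by simp, ?_, rfl⟩
    rw [Submodule.span_empty]
    intro h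
    obtain ⟨x, hx⟩ := exists_ne (0 : g)
    have hxt : x ∈ (⊤ : Submodule K g) := Submodule.mem_top
    rw [← h] at hxt
    exact hx ((Submodule.mem_bot K).mp hxt)
  have hPbdd : BddAbove P := by
    refine ⟨finrank K g, ?_⟩
    rintro d ⟨S', -, -, -, rfl⟩
    exact Submodule.finrank_le _
  obtain ⟨S', hS'S, hS'cl, hS'ne, hS'rank⟩ := Nat.sSup_mem hPne hPbdd
  set b : Submodule K g := Submodule.span K S' with hbdef
  have hbclosed : ∀ x ∈ b, ∀ y ∈ b, ⁅x, y⁆ ∈ b := fun x hx y hy =>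
    lie_mem_span_of_closed hS'cl hx hy
  set bAlg : LieSubalgebra K g := { b with lie_mem' := fun hx hy => hbclosed _ hx _ hy }
    with hbAlg
  have hmembAlg : ∀ x : g, x ∈ bAlg ↔ x ∈ b := fun x => Iff.rfl
  haveI : FiniteDimensional K bAlg := inferInstanceAs (FiniteDimensional K b)
  have hfrankEq : finrank K bAlg = finrank K b := rfl
  -- the set S' inside bAlg
  set S'b : Set bAlg := {x : bAlg | (x : g) ∈ S'} with hS'b
  have hS'bspan : Submodule.span K S'b = ⊤ := by
    rw [eq_top_iff]
    rintro ⟨x, hx⟩ -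
    have key : ∀ (x : g) (hx : x ∈ b), (⟨x, hx⟩ : bAlg) ∈ Submodule.span K S'b := by
      intro x hx
      induction hx using Submodule.span_induction with
      | mem u hu => exact Submodule.subset_span hu
      | zero => exact Submodule.zero_mem _
      | add a c ha' hc' ha hc => exact Submodule.add_mem _ ha hc
      | smul t a ha' ha => exact Submodule.smul_mem _ t ha
    exact key x hx
  have hS'bcl : ∀ u ∈ S'b, ∀ v ∈ S'b, ⁅u, v⁆ ∈ S'b := by
    intro u hu v hv
    exact hS'cl _ hu _ hv
  have hS'bnil : ∀ z ∈ S'b, IsNilpotent (LieAlgebra.ad K bAlg z) := by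
    intro z hz
    exact ad_subalgebra_nilpotent bAlg z (hnil _ (hS'S hz))
  have hfrlt : finrank K bAlg < finrank K g := by
    rw [hfrankEq]
    exact Submodule.finrank_lt hS'ne
  haveI hbnil : LieRing.IsNilpotent bAlg :=
    main_aux bAlg S'b hS'bcl hS'bnil hS'bspan
  -- all weights of bAlg on g vanish
  have hten : ∀ x : bAlg, (x : g) ∈ S' → IsNilpotent (toEnd K bAlg g x) := by
    intro x hx
    rw [toEnd_subalgebra]
    exact hnil _ (hS'S hx)
  have hweight : ∀ χ : Weight K bAlg g, (χ : bAlg → K) = 0 := by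
    intro χ
    have hlin : (χ : bAlg →ₗ[K] K) = 0 := by
      apply LinearMap.ext_on hS'bspan
      intro x hx
      exact Weight.apply_eq_zero_of_isNilpotent x (hten x hx) χ
    funext v
    exact LinearMap.congr_fun hlin v
  have h0 : genWeightSpace g (0 : bAlg → K) = ⊤ := by
    rw [eq_top_iff, ← iSup_genWeightSpace_eq_top' K bAlg g]
    refine iSup_le fun χ => ?_
    rw [hweight χ]
  have hvnil : ∀ v : bAlg, IsNilpotent (toEnd K bAlg g v) := by
    intro v
    apply isNilpotent_of_forall_exists_pow_eq_zero
    intro m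
    have hm : m ∈ genWeightSpace g (0 : bAlg → K) := h0 ▸ LieSubmodule.mem_top m
    obtain ⟨k, hk⟩ := (mem_genWeightSpace g (0 : bAlg → K) m).mp hm v
    refine ⟨k, ?_⟩
    simpa using hk
  haveI : LieModule.IsNilpotent bAlg g := isNilpotent_iff_forall'.mpr hvnil
  have hadb : ∀ v ∈ b, IsNilpotent (LieAlgebra.ad K g v) := by
    intro v hv
    have := hvnil ⟨v, hv⟩
    rwa [toEnd_subalgebra] at this
  -- choose an element of S outside b, of maximal depth in the lower central series
  obtain ⟨r, hr⟩ := LieModule.IsNilpotent.nilpotent K bAlg g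
  set D : Set ℕ := {k | ∃ z, z ∈ S ∧ z ∉ b ∧ z ∈ lowerCentralSeries K bAlg g k} with hD
  have hDne : D.Nonempty := by
    have hex : ∃ z ∈ S, z ∉ b := by
      by_contra h
      push_neg at h
      exact hS'ne (top_le_iff.mp (hspan ▸ Submodule.span_le.mpr h))
    obtain ⟨z, hzS, hzb⟩ := hex
    exact ⟨0, z, hzS, hzb, LieSubmodule.mem_top z⟩
  have hDbdd : BddAbove D := by
    refine ⟨r, ?_⟩
    rintro k ⟨z, hzS, hzb, hzk⟩
    by_contra hlt
    push_neg at hlt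
    have hmem : z ∈ (⊥ : LieSubmodule K bAlg g) :=
      hr ▸ (LieModule.antitone_lowerCentralSeries K bAlg g hlt.le hzk)
    have hz0 : z = (0 : g) := by simpa using hmem
    exact hzb (hz0 ▸ Submodule.zero_mem b)
  obtain ⟨zst, hzstS, hzstb, hzstk⟩ := Nat.sSup_mem hDne hDbdd
  -- every bracket of S' with zst lands in b
  have hbrk : ∀ u ∈ S', ⁅u, zst⁆ ∈ b := by
    intro u hu
    by_contra hnb
    have humem : u ∈ b := Submodule.subset_span hu
    have hmem : ⁅u, zst⁆ ∈ lowerCentralSeries K bAlg g (sSup D + 1) := by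
      rw [LieModule.lowerCentralSeries_succ]
      have : ⁅(⟨u, humem⟩ : bAlg), zst⁆ ∈ ⁅(⊤ : LieIdeal K bAlg), lowerCentralSeries K bAlg g (sSup D)⁆ :=
        LieSubmodule.lie_mem_lie (LieSubmodule.mem_top _) hzstk
      simpa [LieSubalgebra.coe_bracket_of_module] using this
    have hmemD : sSup D + 1 ∈ D := ⟨⁅u, zst⁆, hcl u (hS'S hu) zst hzstS, hnb, hmem⟩
    have := le_csSup hDbdd hmemD
    omega
  have hzb' : ∀ v ∈ b, ⁅zst, v⁆ ∈ b := by
    intro v hv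
    induction hv using Submodule.span_induction with
    | mem u hu =>
      rw [← lie_skew]
      exact Submodule.neg_mem b (hbrk u hu)
    | zero => simp
    | add a c ha' hc' ha hc => rw [lie_add]; exact Submodule.add_mem b ha hc
    | smul t a ha' ha => rw [lie_smul]; exact Submodule.smul_mem b t ha
  -- the closure of S' ∪ {zst}
  set S'' : Set g := {x | BrkCl (S' ∪ {zst}) x} with hS''
  have hS''S : ∀ x ∈ S'', x ∈ S := by
    intro x hx
    induction hx with
    | base h =>
      rcases h with h | h
      · exact hS'S h
      · exact h ▸ hzstS
    | bracket hu hv ihu ihv => exact hcl _ ihu _ ihv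
  have hS''cl : ∀ u ∈ S'', ∀ v ∈ S'', ⁅u, v⁆ ∈ S'' := fun u hu v hv => BrkCl.bracket hu hv
  have hS''b : ∀ x ∈ S'', x ∈ b ∨ x = zst := by
    intro x hx
    induction hx with
    | base h =>
      rcases h with h | h
      · exact Or.inl (Submodule.subset_span h)
      · exact Or.inr h
    | bracket hu hv ihu ihv =>
      rename_i u v _ _
      left
      rcases ihu with hu' | rfl <;> rcases ihv with hv' | rfl
      · exact hbclosed _ hu' _ hv'
      · rw [← lie_skew]; exact Submodule.neg_mem b (hzb' _ hu')
      · exact hzb' _ hv'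
      · simp
  have hS''base : S' ⊆ S'' := fun x hx => BrkCl.base (Or.inl hx)
  have hzstS'' : zst ∈ S'' := BrkCl.base (Or.inr rfl)
  have hS''span : Submodule.span K S'' = ⊤ := by
    by_contra hne
    have hmem : finrank K (Submodule.span K S'') ∈ P := ⟨S'', hS''S, hS''cl, hne, rfl⟩
    have hlt : b < Submodule.span K S'' := by
      refine lt_of_le_of_ne (Submodule.span_le.mpr fun x hx => Submodule.subset_span (hS''base hx)) ?_
      intro h
      exact hzstb (h ▸ Submodule.subset_span hzstS'')
    have hgt : finrank K b < finrank K (Submodule.span K S'') :=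
      Submodule.finrank_lt_finrank_of_lt hlt
    have := le_csSup hPbdd hmem
    omega
  have hsum : ∀ x : g, ∃ v ∈ bAlg, ∃ c : K, x = v + c • zst := by
    intro x
    have hx : x ∈ Submodule.span K S'' := hS''span ▸ Submodule.mem_top
    have hle : Submodule.span K S'' ≤ b ⊔ Submodule.span K {zst} := by
      rw [Submodule.span_le]
      intro y hy
      rcases hS''b y hy with h | rfl
      · exact Submodule.mem_sup_left h
      · exact Submodule.mem_sup_right (Submodule.mem_span_singleton_self y)
    obtain ⟨v, hv, w, hw, rfl⟩ := Submodule.mem_sup.mp (hle hx)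
    obtain ⟨c, rfl⟩ := Submodule.mem_span_singleton.mp hw
    exact ⟨v, hv, c, rfl⟩
  have hid : ∀ x : g, ∀ v ∈ bAlg, ⁅x, v⁆ ∈ bAlg := by
    intro x v hv
    obtain ⟨w, hw, c, rfl⟩ := hsum x
    rw [add_lie, smul_lie]
    exact Submodule.add_mem b (hbclosed _ hw _ hv) (Submodule.smul_mem b c (hzb' _ hv))
  have hfin := lemX g bAlg hid zst hsum hadb (hnil zst hzstS)
  rw [LieAlgebra.isNilpotent_iff_forall (R := K)]
  exact hfin
termination_by finrank K g
decreasing_by exact hfrlt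

end MainAux


/-- A finite-dimensional Lie algebra over an algebraically closed field of characteristic
zero admits a very nilpotent basis if and only if it is nilpotent. -/
theorem veryNilpotentBasis_iff_isNilpotent
    {K : Type*} [Field K] [IsAlgClosed K] [CharZero K]
    {g : Type*} [LieRing g] [LieAlgebra K g] [FiniteDimensional K g] :
    (∃ (n : ℕ) (b : Module.Basis (Fin n) K g),
        ∀ z : g, IsIterBracket (⇑b) z → IsNilpotent (LieAlgebra.ad K g z)) ↔
      LieRing.IsNilpotent g := by
  constructor
  · rintro ⟨n, bas, hb⟩
    apply main_aux (K := K) g {z : g | IsIterBracket (⇑bas) z}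
    · intro u hu v hv
      exact IsIterBracket.bracket hu hv
    · exact fun z hz => hb z hz
    · rw [eq_top_iff, ← bas.span_eq]
      refine Submodule.span_mono ?_
      rintro x ⟨i, rfl⟩
      exact IsIterBracket.base i
  · intro h
    refine ⟨finrank K g, Module.finBasis K g, fun z _ => ?_⟩
    exact (LieAlgebra.isNilpotent_iff_forall (R := K)).mp h z
end

section
/- Let g be a nonzero finite-dimensional semisimple Lie algebra over an algebraically closed field K of characteristic 0. Then g has no very nilpotent basis. -/
open Submodule

section Jacobson

variable {K : Type*} [Field K] {R : Type*} [Ring R] [Algebra K R]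

lemma span_singleton_pow' (w : R) : ∀ k : ℕ, (span K {w}) ^ k = span K {w ^ k}
  | 0 => by simp [Submodule.pow_zero, Submodule.one_eq_span]
  | (k+1) => by
      rw [Submodule.pow_succ, span_singleton_pow' w k, Submodule.span_mul_span,
        Set.singleton_mul_singleton, pow_succ]

lemma pow_le_pow_of_le' {A B : Submodule K R} (h : A ≤ B) : ∀ n, A ^ n ≤ B ^ n
  | 0 => le_rfl
  | (n+1) => by
      rw [Submodule.pow_succ, Submodule.pow_succ]
      exact mul_le_mul' (pow_le_pow_of_le' h n) h

lemma pow_le_self' {A : Submodule K R} (hA : A * A ≤ A) : ∀ n, A ^ (n+1) ≤ A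
  | 0 => by rw [Submodule.pow_one]
  | (n+1) => by
      rw [Submodule.pow_succ]
      exact le_trans (mul_le_mul' (pow_le_self' hA n) le_rfl) hA

lemma pow_eq_bot_of_le' {A : Submodule K R} {N i : ℕ} (hA : A ^ N = ⊥) (h : N ≤ i) :
    A ^ i = ⊥ := by
  obtain ⟨j, rfl⟩ := Nat.exists_eq_add_of_le h
  rw [pow_add, hA, bot_mul]

lemma jacobson_extension (A : Submodule K R) (hA : A * A ≤ A)
    {N : ℕ} (hAN : A ^ (N+1) = ⊥) {w : R} {M : ℕ} (hwM : w ^ (M+1) = 0)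
    (hwA : ∀ a ∈ A, w * a - a * w ∈ A) :
    ∃ C : Submodule K R, (C * C ≤ C) ∧ (∃ N', C ^ (N'+1) = ⊥) ∧ A ≤ C ∧ w ∈ C ∧
      (∀ D : Submodule K R, D * D ≤ D → A ≤ D → w ∈ D → C ≤ D) := by
  set W : Submodule K R := span K {w} with hW
  set P : Submodule K R := ⨆ j : ℕ, W ^ (j+1) with hP
  have hWmem : w ∈ W := Submodule.mem_span_singleton_self w
  have hWP : W ≤ P := by
    have := le_iSup (fun j : ℕ => W ^ (j+1)) 0
    rwa [pow_one] at this
  have hWPle : W * P ≤ P := by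
    rw [hP, Submodule.mul_iSup]
    refine iSup_le fun j => ?_
    calc W * W ^ (j+1) = W ^ ((j+1)+1) := (pow_succ' W (j+1)).symm
    _ ≤ P := le_iSup (fun j : ℕ => W ^ (j+1)) (j+1)
  have hPP : P * P ≤ P := by
    rw [hP, Submodule.iSup_mul]
    refine iSup_le fun i => ?_
    rw [Submodule.mul_iSup]
    refine iSup_le fun j => ?_
    calc W ^ (i+1) * W ^ (j+1) = W ^ ((i+j+1)+1) := by rw [← pow_add]; ring_nf
    _ ≤ P := le_iSup (fun j : ℕ => W ^ (j+1)) (i+j+1)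
  have hWA : W * A ≤ A * P ⊔ A := by
    rw [Submodule.mul_le]
    intro m hm a ha
    obtain ⟨c, rfl⟩ := Submodule.mem_span_singleton.mp hm
    have : (c • w) * a = c • (a * w + (w * a - a * w)) := by
      rw [smul_mul_assoc, add_sub_cancel]
    rw [this]
    refine Submodule.smul_mem _ _ (add_mem ?_ ?_)
    · exact Submodule.mem_sup_left (Submodule.mul_mem_mul ha (hWP hWmem))
    · exact Submodule.mem_sup_right (hwA a ha)
  have hAPP : A * P * P ≤ A * P := by
    rw [mul_assoc]; exact mul_le_mul_right hPP _
  have hPA : P * A ≤ A * P ⊔ A := by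
    rw [hP, Submodule.iSup_mul]
    refine iSup_le fun j => ?_
    induction j with
    | zero => rw [pow_one]; exact hWA
    | succ j ih =>
        have h2 : W ^ (j+1+1) * A = W * (W ^ (j+1) * A) := by
          rw [← mul_assoc, ← pow_succ']
        rw [h2]
        calc W * (W ^ (j+1) * A) ≤ W * (A * P ⊔ A) := mul_le_mul_right ih _
        _ = (W * A) * P ⊔ W * A := by rw [Submodule.mul_sup, mul_assoc]
        _ ≤ (A * P ⊔ A) * P ⊔ (A * P ⊔ A) := sup_le_sup (mul_le_mul_left hWA _) hWA
        _ = A * P * P ⊔ A * P ⊔ (A * P ⊔ A) := by rw [Submodule.sup_mul]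
        _ ≤ A * P ⊔ A := by
            exact sup_le (sup_le (hAPP.trans le_sup_left) le_sup_left) le_rfl
  have hCle : A * P ⊔ A ≤ A ⊔ A * P ⊔ P :=
    sup_le (le_sup_right.trans le_sup_left) (le_sup_left.trans le_sup_left)
  have hAPA : A * P * A ≤ A * P ⊔ A := by
    rw [mul_assoc]
    calc A * (P * A) ≤ A * (A * P ⊔ A) := mul_le_mul_right hPA _
    _ = A * (A * P) ⊔ A * A := Submodule.mul_sup _ _ _
    _ ≤ A * P ⊔ A := by
        refine sup_le ?_ (hA.trans le_sup_right)
        rw [← mul_assoc]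
        exact (mul_le_mul_left hA _).trans le_sup_left
  have hsupP : (A * P ⊔ A) * P ≤ A * P := by
    rw [Submodule.sup_mul]
    exact sup_le hAPP le_rfl
  have hCC : (A ⊔ A * P ⊔ P) * (A ⊔ A * P ⊔ P) ≤ A ⊔ A * P ⊔ P := by
    simp only [Submodule.sup_mul, Submodule.mul_sup, sup_le_iff]
    and_intros
    · exact hA.trans (le_sup_left.trans le_sup_left)
    · exact hAPA.trans hCle
    · exact hPA.trans hCle
    · rw [← mul_assoc]
      exact ((mul_le_mul_left hA _).trans le_sup_left).trans hCle
    · rw [← mul_assoc]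
      exact (((mul_le_mul_left hAPA _).trans hsupP).trans le_sup_left).trans hCle
    · rw [← mul_assoc]
      exact (((mul_le_mul_left hPA _).trans hsupP).trans le_sup_left).trans hCle
    · exact le_sup_left.trans hCle
    · exact (hAPP.trans le_sup_left).trans hCle
    · exact hPP.trans le_sup_right
  -- nilpotency of P
  have hPM : P ^ (M+1) = ⊥ := by
    have hPpow : ∀ m : ℕ, P ^ (m+1) ≤ ⨆ j : ℕ, W ^ (j+m+1) := by
      intro m
      induction m with
      | zero => rw [pow_one]
      | succ m ih =>
          rw [pow_succ]
          calc P ^ (m+1) * P ≤ (⨆ j : ℕ, W ^ (j+m+1)) * P := mul_le_mul_left ih _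
          _ = ⨆ i : ℕ, (W ^ (i+m+1) * P) := Submodule.iSup_mul _ _
          _ ≤ ⨆ j : ℕ, W ^ (j+(m+1)+1) := by
              refine iSup_le fun i => ?_
              rw [hP, Submodule.mul_iSup]
              refine iSup_le fun j => ?_
              rw [← pow_add]
              have he : i+m+1+(j+1) = (i+j)+(m+1)+1 := by ring
              rw [he]
              exact le_iSup (fun j : ℕ => W ^ (j+(m+1)+1)) (i+j)
    refine le_bot_iff.mp ((hPpow M).trans (iSup_le fun j => ?_))
    rw [hW, span_singleton_pow']
    have : w ^ (j+M+1) = 0 := by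
      have he : j+M+1 = j+(M+1) := by ring
      rw [he, pow_add, hwM, mul_zero]
    rw [this]
    simp
  -- nilpotency of the ideal part
  have hstep : ∀ X : Submodule K R, (X ⊔ X*P) * (A ⊔ A*P) ≤ X*A ⊔ (X*A)*P := by
    intro X
    simp only [Submodule.sup_mul, Submodule.mul_sup, sup_le_iff]
    have h4 : (X*P)*A ≤ (X*A)*P ⊔ X*A := by
      rw [mul_assoc]
      calc X * (P * A) ≤ X * (A * P ⊔ A) := mul_le_mul_right hPA _
      _ = X * (A*P) ⊔ X*A := Submodule.mul_sup _ _ _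
      _ ≤ (X*A)*P ⊔ X*A := by rw [← mul_assoc]
    and_intros
    · exact le_sup_left
    · exact h4.trans (sup_le le_sup_right le_sup_left)
    · rw [← mul_assoc]
      exact le_sup_right
    · rw [← mul_assoc]
      calc ((X*P)*A)*P ≤ ((X*A)*P ⊔ X*A)*P := mul_le_mul_left h4 _
      _ = (X*A)*P*P ⊔ (X*A)*P := Submodule.sup_mul _ _ _
      _ ≤ (X*A)*P := by
          refine sup_le ?_ le_rfl
          rw [mul_assoc (X*A) P P]
          exact mul_le_mul_right hPP _
      _ ≤ X*A ⊔ (X*A)*P := le_sup_right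
  have hIpow : ∀ m : ℕ, (A ⊔ A*P) ^ (m+1) ≤ A^(m+1) ⊔ A^(m+1)*P := by
    intro m
    induction m with
    | zero => rw [pow_one, pow_one]
    | succ m ih =>
        rw [pow_succ]
        calc (A ⊔ A*P)^(m+1) * (A ⊔ A*P) ≤ (A^(m+1) ⊔ A^(m+1)*P) * (A ⊔ A*P) :=
              mul_le_mul_left ih _
        _ ≤ A^(m+1)*A ⊔ (A^(m+1)*A)*P := hstep _
        _ = A^(m+2) ⊔ A^(m+2)*P := by rw [← pow_succ]
  have hIN : (A ⊔ A*P) ^ (N+1) = ⊥ := by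
    refine le_bot_iff.mp ((hIpow N).trans ?_)
    rw [hAN, bot_mul, sup_idem]
  -- nilpotency modulo the ideal part
  have hCpow : ∀ m : ℕ, (A ⊔ A*P ⊔ P) ^ (m+1) ≤ (A ⊔ A*P) ⊔ P^(m+1) := by
    intro m
    induction m with
    | zero => rw [pow_one, pow_one]
    | succ m ih =>
        have hIC : (A ⊔ A*P) * (A ⊔ A*P ⊔ P) ≤ A ⊔ A*P := by
          simp only [Submodule.sup_mul, Submodule.mul_sup, sup_le_iff]
          and_intros
          · exact hA.trans le_sup_left
          · exact hAPA.trans (sup_le le_sup_right le_sup_left)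
          · rw [← mul_assoc]
            exact (mul_le_mul_left hA _).trans le_sup_right
          · rw [← mul_assoc]
            exact ((mul_le_mul_left hAPA _).trans hsupP).trans le_sup_right
          · exact le_sup_right
          · exact hAPP.trans le_sup_right
        have hPm : P^(m+1) ≤ P := pow_le_self' hPP m
        rw [pow_succ]
        calc (A ⊔ A*P ⊔ P)^(m+1) * (A ⊔ A*P ⊔ P)
            ≤ ((A ⊔ A*P) ⊔ P^(m+1)) * (A ⊔ A*P ⊔ P) := mul_le_mul_left ih _
        _ = (A ⊔ A*P) * (A ⊔ A*P ⊔ P) ⊔ P^(m+1) * (A ⊔ A*P ⊔ P) := Submodule.sup_mul _ _ _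
        _ ≤ (A ⊔ A*P) ⊔ P^(m+2) := by
            refine sup_le (hIC.trans le_sup_left) ?_
            rw [Submodule.mul_sup, Submodule.mul_sup]
            refine sup_le (sup_le ?_ ?_) ?_
            · exact ((mul_le_mul_left hPm _).trans (hPA.trans
                (sup_le le_sup_right le_sup_left))).trans le_sup_left
            · rw [← mul_assoc]
              refine le_sup_left.trans' ?_
              calc (P^(m+1)*A)*P ≤ (P*A)*P :=
                    mul_le_mul_left (mul_le_mul_left hPm _) _
              _ ≤ (A*P ⊔ A)*P := mul_le_mul_left hPA _
              _ ≤ A*P := hsupP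
              _ ≤ A ⊔ A*P := le_sup_right
            · rw [← pow_succ]
              exact le_sup_right
  refine ⟨A ⊔ A * P ⊔ P, hCC, ⟨M*(N+1)+N, ?_⟩, le_sup_left.trans le_sup_left,
    Submodule.mem_sup_right (hWP hWmem), ?_⟩
  · have he : M*(N+1)+N+1 = (M+1)*(N+1) := by ring
    rw [he, pow_mul]
    refine le_bot_iff.mp ?_
    calc ((A ⊔ A*P ⊔ P)^(M+1))^(N+1) ≤ ((A ⊔ A*P) ⊔ P^(M+1))^(N+1) :=
          pow_le_pow_of_le' (hCpow M) _
    _ = ((A ⊔ A*P))^(N+1) := by rw [hPM, sup_bot_eq]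
    _ ≤ ⊥ := hIN.le
  · intro D hD hAD hwD
    have hPD : P ≤ D := by
      refine iSup_le fun j => ?_
      induction j with
      | zero =>
          rw [pow_one, hW]
          exact (span_le.mpr (Set.singleton_subset_iff.mpr hwD))
      | succ j ih =>
          rw [pow_succ]
          refine (mul_le_mul' ih ?_).trans hD
          rw [hW]
          exact span_le.mpr (Set.singleton_subset_iff.mpr hwD)
    exact sup_le (sup_le hAD ((mul_le_mul' hAD hPD).trans hD)) hPD

end Jacobson

section Jacobson2

variable {K : Type*} [Field K] {R : Type*} [Ring R] [Algebra K R]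

lemma jacobson_grow [FiniteDimensional K R] (S : Set R)
    (hSnil : ∀ s ∈ S, IsNilpotent s) (hScl : ∀ s ∈ S, ∀ t ∈ S, s * t - t * s ∈ S) :
    ∀ k : ℕ, ∀ A : Submodule K R, (A * A ≤ A) → (∃ N, A ^ (N+1) = ⊥) →
    (∀ D : Submodule K R, D * D ≤ D → span K (S ∩ A) ≤ D → A ≤ D) →
    Module.finrank K R ≤ Module.finrank K A + k →
    ∃ B : Submodule K R, (∃ N, B ^ (N+1) = ⊥) ∧ S ⊆ B := by
  intro k
  induction k with
  | zero =>
      intro A hA hAN _ hrank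
      have hAtop : A = ⊤ := Submodule.eq_top_of_finrank_eq
        (le_antisymm (Submodule.finrank_le A) (by omega))
      exact ⟨A, hAN, by rw [hAtop]; exact fun x _ => trivial⟩
  | succ k ih =>
      intro A hA hAN hAmin hrank
      by_cases hS : S ⊆ A
      · exact ⟨A, hAN, hS⟩
      obtain ⟨w0, hw0S, hw0A⟩ := Set.not_subset.mp hS
      obtain ⟨N, hAN'⟩ := hAN
      set F : ℕ → Submodule K R :=
        fun m => ⨆ p : ℕ × ℕ, ⨆ _ : p.1 + p.2 = m, A ^ p.1 * ⊤ * A ^ p.2 with hF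
      have hFbot : ∀ m, 2*(N+1) ≤ m → F m = ⊥ := by
        intro m hm
        refine le_bot_iff.mp (iSup_le fun p => iSup_le fun hp => ?_)
        rcases le_or_gt (N+1) p.1 with h | h
        · rw [pow_eq_bot_of_le' hAN' h, bot_mul, bot_mul]
        · have h2 : N+1 ≤ p.2 := by omega
          rw [pow_eq_bot_of_le' hAN' h2, mul_bot]
      have hFmul : ∀ m, ∀ u ∈ A, ∀ x ∈ F m, u * x - x * u ∈ F (m+1) := by
        intro m u hu x hx
        have hl : A * F m ≤ F (m+1) := by
          rw [hF, Submodule.mul_iSup]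
          refine iSup_le fun p => ?_
          rw [Submodule.mul_iSup]
          refine iSup_le fun hp => ?_
          have he : A * (A ^ p.1 * ⊤ * A ^ p.2) = A ^ (p.1+1) * ⊤ * A ^ p.2 := by
            rw [← mul_assoc, ← mul_assoc, ← pow_succ']
          rw [he]
          exact le_iSup₂ (f := fun (p : ℕ × ℕ) (_ : p.1 + p.2 = m + 1) =>
            A ^ p.1 * ⊤ * A ^ p.2) (p.1+1, p.2) (by omega)
        have hr : F m * A ≤ F (m+1) := by
          rw [hF, Submodule.iSup_mul]
          refine iSup_le fun p => ?_
          rw [Submodule.iSup_mul]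
          refine iSup_le fun hp => ?_
          have he : (A ^ p.1 * ⊤ * A ^ p.2) * A = A ^ p.1 * ⊤ * A ^ (p.2+1) := by
            rw [mul_assoc, ← pow_succ]
          rw [he]
          exact le_iSup₂ (f := fun (p : ℕ × ℕ) (_ : p.1 + p.2 = m + 1) =>
            A ^ p.1 * ⊤ * A ^ p.2) (p.1, p.2+1) (by omega)
        exact sub_mem (hl (Submodule.mul_mem_mul hu hx)) (hr (Submodule.mul_mem_mul hx hu))
      have hdesc : ∀ t m, 2*(N+1) ≤ m + t → ∀ w', w' ∈ S → w' ∉ A → w' ∈ F m →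
          ∃ w, w ∈ S ∧ w ∉ A ∧ ∀ u, u ∈ S → u ∈ A → u * w - w * u ∈ A := by
        intro t
        induction t with
        | zero =>
            intro m hm w' hw'S hw'A hw'F
            rw [hFbot m (by omega), Submodule.mem_bot] at hw'F
            exact absurd (hw'F ▸ A.zero_mem) hw'A
        | succ t iht =>
            intro m hm w' hw'S hw'A hw'F
            by_cases hgood : ∀ u, u ∈ S → u ∈ A → u * w' - w' * u ∈ A
            · exact ⟨w', hw'S, hw'A, hgood⟩
            · push_neg at hgood
              obtain ⟨u, huS, huA, hcomm⟩ := hgood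
              exact iht (m+1) (by omega) _ (hScl u huS w' hw'S) hcomm
                (hFmul m u huA w' hw'F)
      have hF0 : w0 ∈ F 0 := by
        have h1 : A ^ 0 * (⊤ : Submodule K R) * A ^ 0 = ⊤ := by
          rw [Submodule.pow_zero, Submodule.one_mul, mul_one]
        have h2 : A ^ 0 * (⊤ : Submodule K R) * A ^ 0 ≤ F 0 :=
          le_iSup₂ (f := fun (p : ℕ × ℕ) (_ : p.1 + p.2 = 0) =>
            A ^ p.1 * ⊤ * A ^ p.2) (0, 0) rfl
        rw [h1] at h2
        exact h2 Submodule.mem_top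
      obtain ⟨w, hwS, hwnA, hwgood⟩ := hdesc (2*(N+1)) 0 (by omega) w0 hw0S hw0A hF0
      -- derivation property
      have hwA : ∀ a ∈ A, w * a - a * w ∈ A := by
        set φ : R →ₗ[K] R := LinearMap.mulLeft K w - LinearMap.mulRight K w with hφ
        have hφa : ∀ x, φ x = w * x - x * w := fun x => rfl
        have hle : A ≤ A ⊓ Submodule.comap φ A := by
          refine hAmin _ ?_ ?_
          · rw [Submodule.mul_le]
            intro x hx y hy
            refine Submodule.mem_inf.mpr ⟨hA (Submodule.mul_mem_mul
              (Submodule.mem_inf.mp hx).1 (Submodule.mem_inf.mp hy).1), ?_⟩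
            rw [Submodule.mem_comap, hφa]
            have he : w * (x*y) - (x*y) * w = (w*x - x*w)*y + x*(w*y - y*w) := by
              noncomm_ring
            rw [he]
            exact add_mem (hA (Submodule.mul_mem_mul (Submodule.mem_inf.mp hx).2
              (Submodule.mem_inf.mp hy).1)) (hA (Submodule.mul_mem_mul
              (Submodule.mem_inf.mp hx).1 (Submodule.mem_inf.mp hy).2))
          · rw [span_le]
            rintro u ⟨huS, huA⟩
            have h2 : φ u ∈ A := by
              rw [hφa]
              have he : w * u - u * w = -(u * w - w * u) := by noncomm_ring
              rw [he]
              exact neg_mem (hwgood u huS huA)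
            exact Submodule.mem_inf.mpr ⟨huA, h2⟩
        intro a ha
        exact (Submodule.mem_inf.mp (hle ha)).2
      obtain ⟨M0, hM0⟩ := hSnil w hwS
      have hwM : w ^ (M0+1) = 0 := by rw [pow_succ, hM0, zero_mul]
      obtain ⟨C, hCC, hCN, hAC, hwC, hCmin⟩ := jacobson_extension A hA hAN' hwM hwA
      have hCmin' : ∀ D : Submodule K R, D * D ≤ D → span K (S ∩ C) ≤ D → C ≤ D := by
        intro D hD hspan
        refine hCmin D hD (hAmin D hD ?_) (hspan (subset_span ⟨hwS, hwC⟩))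
        refine le_trans (span_mono ?_) hspan
        exact Set.inter_subset_inter_right S (fun x hx => hAC hx)
      have hlt : A < C := lt_of_le_of_ne hAC (fun h => hwnA (h ▸ hwC))
      have hrank' : Module.finrank K R ≤ Module.finrank K C + k := by
        have := Submodule.finrank_lt_finrank_of_lt hlt
        omega
      exact ih C hCC hCN hCmin' hrank'

theorem jacobson_nil [FiniteDimensional K R] (S : Set R)
    (hSnil : ∀ s ∈ S, IsNilpotent s) (hScl : ∀ s ∈ S, ∀ t ∈ S, s * t - t * s ∈ S) :
    ∀ x ∈ span K S, IsNilpotent x := by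
  have h1 : (⊥ : Submodule K R) * ⊥ ≤ ⊥ := by rw [Submodule.mul_bot]
  have h2 : (⊥ : Submodule K R) ^ (0+1) = ⊥ := pow_one _
  obtain ⟨B, ⟨N, hBN⟩, hSB⟩ := jacobson_grow S hSnil hScl (Module.finrank K R)
    (⊥ : Submodule K R) h1 ⟨0, h2⟩ (fun D _ _ => bot_le) (by simp)
  intro x hx
  refine ⟨N+1, ?_⟩
  have hxB : x ∈ B := (span_le.mpr hSB) hx
  have := Submodule.pow_mem_pow B hxB (N+1)
  rwa [hBN, Submodule.mem_bot] at this

end Jacobson2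


/-- A nonzero finite-dimensional semisimple Lie algebra over an algebraically closed field
of characteristic zero has no very nilpotent basis. -/
theorem no_veryNilpotentBasis_of_isSemisimple
    {K : Type*} [Field K] [IsAlgClosed K] [CharZero K]
    {g : Type*} [LieRing g] [LieAlgebra K g] [FiniteDimensional K g]
    [LieAlgebra.IsSemisimple K g] [Nontrivial g] :
    ¬ ∃ (n : ℕ) (b : Module.Basis (Fin n) K g),
        ∀ z : g, IsIterBracket (⇑b) z → IsNilpotent (LieAlgebra.ad K g z) := by
  rintro ⟨n, b, hb⟩
  letI : LieRing (Module.End K g) := LieRing.ofAssociativeRing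
  set S : Set (Module.End K g) := (LieAlgebra.ad K g) '' {z | IsIterBracket ⇑b z} with hS
  have hSnil : ∀ s ∈ S, IsNilpotent s := by rintro s ⟨z, hz, rfl⟩; exact hb z hz
  have hScl : ∀ s ∈ S, ∀ t ∈ S, s * t - t * s ∈ S := by
    rintro s ⟨u, hu, rfl⟩ t ⟨v, hv, rfl⟩
    refine ⟨⁅u, v⁆, IsIterBracket.bracket hu hv, ?_⟩
    rw [LieHom.map_lie, Ring.lie_def]
  have had : ∀ x : g, LieAlgebra.ad K g x ∈ Submodule.span K S := by
    intro x
    have hx : x ∈ Submodule.span K (Set.range ⇑b) := by rw [b.span_eq]; trivial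
    have hle : Submodule.span K (Set.range ⇑b) ≤
        Submodule.comap (LieAlgebra.ad K g).toLinearMap (Submodule.span K S) := by
      rw [Submodule.span_le]
      rintro _ ⟨i, rfl⟩
      exact Submodule.subset_span ⟨b i, IsIterBracket.base i, rfl⟩
    exact hle hx
  have hnil : ∀ x : g, IsNilpotent (LieAlgebra.ad K g x) := fun x =>
    jacobson_nil S hSnil hScl _ (had x)
  have hgn : LieRing.IsNilpotent g := (LieAlgebra.isNilpotent_iff_forall (R := K)).mpr hnil
  have h1 : Nontrivial (LieAlgebra.center K g) :=
    LieAlgebra.non_trivial_center_of_isNilpotent (R := K) (L := g)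
  have h2 : LieAlgebra.center K g = ⊥ := LieAlgebra.center_eq_bot K g
  rw [LieSubmodule.nontrivial_iff_ne_bot] at h1
  exact h1 h2
end

section
/- Let g be a finite-dimensional semisimple Lie algebra over an algebraically closed field K of characteristic 0, let (e,h,f) be an sl2-triple in g (so [h,e]=2e, [h,f]=-2f, [e,f]=h), and let g = ⊕_{i∈ℤ} g(h,i) be the eigenspace decomposition of ad_h, with pr_0 : g → g(h,0) the projection onto the zero eigenspace along the other eigenspaces. Then an element x of the subspace ⊕_{i≥0} g(h,i) is ad-nilpotent in g if and only if pr_0(x) is ad-nilpotent in g. -/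
open Module.End

set_option maxHeartbeats 1000000

/-- For an `sl2`-triple `(e, h, f)` in a finite-dimensional semisimple Lie algebra over an
algebraically closed field of characteristic zero, an element `x` of the non-negative part
`⊕_{i ≥ 0} g(h,i)` of the characteristic grading is ad-nilpotent if and only if its
projection `pr₀ x` onto `g(h,0)` (along the other eigenspaces) is ad-nilpotent. -/
theorem isNilpotent_ad_iff_isNilpotent_ad_pr0
    {K : Type*} [Field K] [IsAlgClosed K] [CharZero K]
    {g : Type*} [LieRing g] [LieAlgebra K g] [FiniteDimensional K g]
    [LieAlgebra.IsSemisimple K g]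
    (e h f : g) (he : ⁅h, e⁆ = (2 : K) • e) (hf : ⁅h, f⁆ = (-2 : K) • f) (hef : ⁅e, f⁆ = h)
    (pr0 : g →ₗ[K] g)
    (hpr0 : ∀ (i : ℤ) (x : g), x ∈ eigenspace (LieAlgebra.ad K g h) (i : K) →
        pr0 x = if i = 0 then x else 0)
    (x : g) (hx : x ∈ ⨆ i : ℕ, eigenspace (LieAlgebra.ad K g h) (i : K)) :
    IsNilpotent (LieAlgebra.ad K g x) ↔ IsNilpotent (LieAlgebra.ad K g (pr0 x)) := by
  classical
  set V : K → Submodule K g := (LieAlgebra.ad K g h).maxGenEigenspace with hVdef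
  -- bracket additivity on generalized eigenspaces
  have hVlie : ∀ (μ ν : K) (u v : g), u ∈ V μ → v ∈ V ν → ⁅u, v⁆ ∈ V (μ + ν) := by
    intro μ ν u v hu hv
    exact LieModule.lie_mem_maxGenEigenspace_toEnd hu hv
  have htop : ⨆ μ, V μ = ⊤ := Module.End.iSup_maxGenEigenspace_eq_top _
  have hind : iSupIndep V := Module.End.independent_maxGenEigenspace _
  have hfin : {μ : K | V μ ≠ ⊥}.Finite :=
    WellFoundedGT.finite_ne_bot_of_iSupIndep hind
  -- the filtration
  set W : K → ℕ → Submodule K g :=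
    fun μ k => ⨆ (n : ℕ) (_ : k ≤ n), V (μ + n) with hWdef
  have hVW : ∀ (μ : K) (n k : ℕ), k ≤ n → V (μ + n) ≤ W μ k := by
    intro μ n k hk
    exact le_iSup₂_of_le n hk le_rfl
  have hWmono : ∀ (μ : K) (k l : ℕ), k ≤ l → W μ l ≤ W μ k := by
    intro μ k l hkl
    exact iSup₂_le fun n hn => hVW μ n k (hkl.trans hn)
  have hWW : ∀ (μ : K) (n : ℕ), W (μ + n) 1 ≤ W μ (n + 1) := by
    intro μ n
    refine iSup₂_le fun m hm => ?_
    have hcast : (μ + n) + m = μ + ((n + m : ℕ) : K) := by push_cast; ring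
    rw [hcast]
    exact hVW μ (n + m) (n + 1) (by omega)
  -- decompose x
  have hdecomp : pr0 x ∈ eigenspace (LieAlgebra.ad K g h) 0 ∧
      x - pr0 x ∈ ⨆ (i : ℕ) (_ : 1 ≤ i), eigenspace (LieAlgebra.ad K g h) (i : K) := by
    refine Submodule.iSup_induction (motive := fun a => pr0 a ∈ eigenspace (LieAlgebra.ad K g h) 0 ∧
      a - pr0 a ∈ ⨆ (i : ℕ) (_ : 1 ≤ i), eigenspace (LieAlgebra.ad K g h) (i : K)) _ hx ?_ ?_ ?_
    · intro i a ha
      have ha' : a ∈ eigenspace (LieAlgebra.ad K g h) (((i : ℤ) : K)) := by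
        rwa [Int.cast_natCast]
      have := hpr0 i a ha'
      rcases eq_or_ne i 0 with hi | hi
      · subst hi
        rw [this, if_pos (by simp : ((0:ℕ):ℤ) = 0)]
        constructor
        · exact_mod_cast ha
        · simp
      · rw [this, if_neg (by exact_mod_cast hi)]
        constructor
        · exact zero_mem _
        · rw [sub_zero]
          exact Submodule.mem_iSup_of_mem i (Submodule.mem_iSup_of_mem (by omega) ha)
    · simp
    · intro a b hca hcb
      refine ⟨by rw [map_add]; exact add_mem hca.1 hcb.1, ?_⟩
      have : a + b - pr0 (a + b) = (a - pr0 a) + (b - pr0 b) := by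
        rw [map_add]; abel
      rw [this]
      exact add_mem hca.2 hcb.2
  obtain ⟨hy0, hz1⟩ := hdecomp
  have heigle : ∀ μ : K, eigenspace (LieAlgebra.ad K g h) μ ≤ V μ := fun μ =>
    ((LieAlgebra.ad K g h).genEigenspace μ).monotone le_top
  have hyV0 : pr0 x ∈ V 0 := heigle 0 hy0
  have hzS : x - pr0 x ∈ ⨆ (i : ℕ) (_ : 1 ≤ i), V (i : K) := by
    have hmono : (⨆ (i : ℕ) (_ : 1 ≤ i), eigenspace (LieAlgebra.ad K g h) (i : K)) ≤
        ⨆ (i : ℕ) (_ : 1 ≤ i), V (i : K) :=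
      iSup₂_le fun i hi => le_iSup₂_of_le i hi (heigle _)
    exact hmono hz1
  -- action lemmas
  have hyV : ∀ (μ : K) (v : g), v ∈ V μ → ⁅pr0 x, v⁆ ∈ V μ := by
    intro μ v hv
    simpa using hVlie 0 μ _ v hyV0 hv
  have hzW : ∀ (μ : K) (v : g), v ∈ V μ → ⁅x - pr0 x, v⁆ ∈ W μ 1 := by
    intro μ v hv
    have : ⁅v, x - pr0 x⁆ ∈ W μ 1 := by
      have hmap : (⨆ (i : ℕ) (_ : 1 ≤ i), V (i : K)) ≤
          Submodule.comap (LieAlgebra.ad K g v) (W μ 1) := by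
        refine iSup₂_le fun i hi => fun u hu => ?_
        simp only [Submodule.mem_comap, LieAlgebra.ad_apply]
        exact hVW μ i 1 hi (hVlie μ (i : K) v u hv hu)
      simpa using hmap hzS
    have hskew : ⁅x - pr0 x, v⁆ = -⁅v, x - pr0 x⁆ := (lie_skew _ _).symm
    rw [hskew]
    exact neg_mem this
  have hxW : ∀ (μ : K) (k : ℕ) (v : g), v ∈ W μ k → ⁅x, v⁆ ∈ W μ k := by
    intro μ k v hv
    have hmap : W μ k ≤ Submodule.comap (LieAlgebra.ad K g x) (W μ k) := by
      refine iSup₂_le fun n hn => fun u hu => ?_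
      simp only [Submodule.mem_comap, LieAlgebra.ad_apply]
      have hsplit : ⁅x, u⁆ = ⁅pr0 x, u⁆ + ⁅x - pr0 x, u⁆ := by
        rw [← add_lie]; congr 1; abel
      rw [hsplit]
      refine add_mem (hVW μ n k hn (hyV _ _ hu)) ?_
      exact hWmono μ k (n + 1) (by omega) (hWW μ n (hzW _ _ hu))
    simpa using hmap hv
  -- the key induction
  have key : ∀ (μ : K) (v : g), v ∈ V μ → ∀ m : ℕ,
      ((LieAlgebra.ad K g (pr0 x)) ^ m) v ∈ V μ ∧
      ((LieAlgebra.ad K g x) ^ m) v - ((LieAlgebra.ad K g (pr0 x)) ^ m) v ∈ W μ 1 := by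
    intro μ v hv m
    induction m with
    | zero => exact ⟨by simpa using hv, by simp⟩
    | succ m ih =>
      obtain ⟨ih1, ih2⟩ := ih
      set A := LieAlgebra.ad K g x
      set B := LieAlgebra.ad K g (pr0 x)
      constructor
      · rw [pow_succ', Module.End.mul_apply]
        exact hyV μ _ ih1
      · rw [pow_succ', pow_succ', Module.End.mul_apply, Module.End.mul_apply]
        have hsplit : A ((A ^ m) v) - B ((B ^ m) v) =
            A ((A ^ m) v - (B ^ m) v) + ⁅x - pr0 x, (B ^ m) v⁆ := by
          simp only [map_sub, sub_lie]
          show _ = (A ((A^m) v) - A ((B^m) v)) + (⁅x, (B^m) v⁆ - ⁅pr0 x, (B^m) v⁆)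
          have hA : A ((B^m) v) = ⁅x, (B^m) v⁆ := rfl
          have hB : B ((B^m) v) = ⁅pr0 x, (B^m) v⁆ := rfl
          rw [hA, hB]; abel
        rw [hsplit]
        refine add_mem ?_ (hzW μ _ ih1)
        exact hxW μ 1 _ ih2
  -- vanishing of the filtration
  have hWbot : ∀ μ : K, ∃ k : ℕ, W μ k = ⊥ := by
    intro μ
    have hinj : Function.Injective (fun n : ℕ => μ + (n : K)) := by
      intro a b hab
      simp only [add_right_inj] at hab
      exact_mod_cast hab
    have hfin' : {n : ℕ | V (μ + n) ≠ ⊥}.Finite := by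
      have := hfin.preimage (hinj.injOn)
      simpa [Set.preimage] using this
    obtain ⟨b, hb⟩ := hfin'.bddAbove
    refine ⟨b + 1, ?_⟩
    rw [eq_bot_iff]
    refine iSup₂_le fun n hn => ?_
    have : V (μ + n) = ⊥ := by
      by_contra hcon
      have := hb (Set.mem_setOf.mpr hcon)
      omega
    rw [this]
  -- disjointness
  have hdisj : ∀ μ : K, Disjoint (V μ) (W μ 1) := by
    intro μ
    refine (hind μ).mono_right ?_
    refine iSup₂_le fun n hn => ?_
    have hne : μ + (n : K) ≠ μ := by
      intro hcon
      have hn0 : (n : K) = 0 := by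
        have := hcon
        rwa [add_eq_left] at this
      have : n = 0 := by exact_mod_cast hn0
      omega
    exact le_iSup₂_of_le (μ + n) hne le_rfl
  constructor
  · rintro ⟨M, hM⟩
    refine ⟨M, ?_⟩
    ext v
    rw [LinearMap.zero_apply]
    have hv : v ∈ ⨆ μ, V μ := htop ▸ Submodule.mem_top
    refine Submodule.iSup_induction (motive := fun v => ((LieAlgebra.ad K g (pr0 x)) ^ M) v = 0)
      V hv ?_ (by simp) ?_
    · intro μ u hu
      obtain ⟨k1, k2⟩ := key μ u hu M
      have hz : ((LieAlgebra.ad K g x) ^ M) u = 0 := by rw [hM]; rfl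
      rw [hz, zero_sub] at k2
      have hmem : ((LieAlgebra.ad K g (pr0 x)) ^ M) u ∈ W μ 1 := by
        simpa using neg_mem k2
      exact (Submodule.disjoint_def.mp (hdisj μ)) _ k1 hmem
    · intro a b ha hb
      rw [map_add, ha, hb, add_zero]
  · rintro ⟨M, hM⟩
    set A := LieAlgebra.ad K g x with hAdef
    have hstep : ∀ (μ : K) (j : ℕ), W μ j ≤ Submodule.comap (A ^ M) (W μ (j + 1)) := by
      intro μ j
      refine iSup₂_le fun n hn => fun u hu => ?_
      simp only [Submodule.mem_comap]
      obtain ⟨k1, k2⟩ := key (μ + n) u hu M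
      have hz : ((LieAlgebra.ad K g (pr0 x)) ^ M) u = 0 := by rw [hM]; rfl
      rw [hz, sub_zero] at k2
      exact hWmono μ (j + 1) (n + 1) (by omega) (hWW μ n k2)
    have hmaxtop : Module.End.maxGenEigenspace A 0 = ⊤ := by
      rw [eq_top_iff, ← htop]
      refine iSup_le fun μ => fun v hv => ?_
      obtain ⟨k, hk⟩ := hWbot μ
      have hWj : ∀ j : ℕ, ((A ^ M) ^ j) v ∈ W μ j := by
        intro j
        induction j with
        | zero =>
          have : v ∈ V (μ + ((0 : ℕ) : K)) := by simpa using hv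
          simpa using hVW μ 0 0 le_rfl this
        | succ j ihj =>
          rw [pow_succ', Module.End.mul_apply]
          exact hstep μ j ihj
      have hzero : ((A ^ M) ^ k) v = 0 := by
        have := hWj k
        rw [hk] at this
        simpa using this
      rw [Module.End.mem_maxGenEigenspace]
      refine ⟨M * k, ?_⟩
      have : (A - (0 : K) • (1 : Module.End K g)) = A := by simp
      rw [this, pow_mul]
      exact hzero
    rw [Module.End.maxGenEigenspace_eq] at hmaxtop
    refine ⟨Module.End.maxGenEigenspaceIndex A 0, ?_⟩
    ext v
    have hv : v ∈ Module.End.genEigenspace A 0 (Module.End.maxGenEigenspaceIndex A 0) :=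
      hmaxtop ▸ Submodule.mem_top
    rw [Module.End.mem_genEigenspace_nat] at hv
    simpa using hv
end

section
/- Let g be a finite-dimensional Lie algebra over an algebraically closed field K of characteristic 0. If g has a very nilpotent basis, then g is solvable. -/
open Module Submodule

section Jacobson

variable {K V : Type*} [Field K] [AddCommGroup V] [Module K V]

/-- A "nil flag" for a set of endomorphisms: a finite decreasing chain of submodules,
starting at `⊤` and ending at `⊥`, shifted down by every element of `B`. -/
def IsNilFlag (B : Set (Module.End K V)) : Prop :=
  ∃ (N : ℕ) (U : ℕ → Submodule K V), U 0 = ⊤ ∧ (∀ k, N ≤ k → U k = ⊥) ∧ Antitone U ∧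
    ∀ f ∈ B, ∀ k, (U k).map f ≤ U (k + 1)

theorem map_mul_apply (f g : Module.End K V) (Q : Submodule K V) :
    Q.map (f * g) = (Q.map (g : V →ₗ[K] V)).map (f : V →ₗ[K] V) := by
  exact Submodule.map_comp _ _ _

theorem IsNilFlag.prod_eq_zero {B : Set (Module.End K V)} (h : IsNilFlag B) :
    ∃ N : ℕ, ∀ w : List (Module.End K V), (∀ f ∈ w, f ∈ B) → N ≤ w.length →
      w.prod = 0 := by
  obtain ⟨N, U, hU0, hUN, hanti, hmap⟩ := h
  refine ⟨N, fun w hw hlen => ?_⟩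
  have key : ∀ w : List (Module.End K V), (∀ f ∈ w, f ∈ B) →
      (⊤ : Submodule K V).map (w.prod : V →ₗ[K] V) ≤ U w.length := by
    intro w
    induction w with
    | nil => intro _; simp [hU0]
    | cons f t ih =>
      intro hmem
      have h1 : (⊤ : Submodule K V).map ((f :: t).prod : V →ₗ[K] V)
          = ((⊤ : Submodule K V).map (t.prod : V →ₗ[K] V)).map (f : V →ₗ[K] V) := by
        rw [List.prod_cons, map_mul_apply]
      rw [h1]
      calc ((⊤ : Submodule K V).map (t.prod : V →ₗ[K] V)).map (f : V →ₗ[K] V)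
          ≤ (U t.length).map (f : V →ₗ[K] V) :=
            Submodule.map_mono (ih fun g hg => hmem g (List.mem_cons_of_mem _ hg))
        _ ≤ U (t.length + 1) := hmap f (hmem f List.mem_cons_self) _
  have := (key w hw).trans (hUN _ hlen).le
  ext x
  simpa using (this ⟨x, trivial, rfl⟩ : w.prod x ∈ (⊥ : Submodule K V))

theorem IsNilFlag.pow_eq_zero {B : Set (Module.End K V)} (h : IsNilFlag B)
    {x : Module.End K V} (hx : x ∈ B) : IsNilpotent x := by
  obtain ⟨N, hN⟩ := h.prod_eq_zero
  refine ⟨N, ?_⟩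
  have : x ^ N = (List.replicate N x).prod := by
    rw [List.prod_replicate]
  rw [this]
  exact hN _ (fun f hf => (List.eq_of_mem_replicate hf) ▸ hx) (by simp)

variable (K) in
/-- The descending chain of submodules `T^i • V`. -/
def Vpow (T : Set (Module.End K V)) : ℕ → Submodule K V
  | 0 => ⊤
  | (i+1) => Submodule.span K {y | ∃ f ∈ T, ∃ x ∈ Vpow T i, y = f x}

theorem Vpow_succ_le {T : Set (Module.End K V)} {P : Submodule K V} (i : ℕ)
    (h : ∀ f ∈ T, ∀ x ∈ Vpow K T i, f x ∈ P) : Vpow K T (i+1) ≤ P := by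
  rw [Vpow]
  exact Submodule.span_le.2 (by rintro y ⟨f, hf, x, hx, rfl⟩; exact h f hf x hx)

theorem mem_Vpow_succ {T : Set (Module.End K V)} {f : Module.End K V} (hf : f ∈ T) {x : V}
    {i : ℕ} (hx : x ∈ Vpow K T i) : f x ∈ Vpow K T (i+1) :=
  Submodule.subset_span ⟨f, hf, x, hx, rfl⟩

theorem Vpow_succ_le_self {T : Set (Module.End K V)} : ∀ i, Vpow K T (i+1) ≤ Vpow K T i
  | 0 => le_top
  | (i+1) => Vpow_succ_le _ fun f hf x hx => mem_Vpow_succ hf (Vpow_succ_le_self i hx)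

theorem Vpow_le_of_le {T : Set (Module.End K V)} {i j : ℕ} (h : i ≤ j) :
    Vpow K T j ≤ Vpow K T i := by
  induction j with
  | zero => rw [Nat.le_zero.1 h]
  | succ j ih =>
    rcases Nat.lt_or_ge i (j+1) with hlt | hge
    · exact (Vpow_succ_le_self j).trans (ih (Nat.lt_succ_iff.1 hlt))
    · rw [le_antisymm h hge]

theorem Vpow_le_flag {T : Set (Module.End K V)} {U : ℕ → Submodule K V}
    (hU0 : U 0 = ⊤) (hmap : ∀ f ∈ T, ∀ k, (U k).map f ≤ U (k + 1)) :
    ∀ i, Vpow K T i ≤ U i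
  | 0 => hU0.ge
  | (i+1) => Vpow_succ_le _ fun f hf x hx =>
      hmap f hf i ⟨x, Vpow_le_flag hU0 hmap i hx, rfl⟩

theorem Vpow_s_inv {T : Set (Module.End K V)} {s : Module.End K V}
    (hcomm : ∀ f ∈ T, s * f - f * s ∈ T) :
    ∀ i, ∀ x ∈ Vpow K T i, s x ∈ Vpow K T i := by
  intro i
  induction i with
  | zero => intro x _; trivial
  | succ i ih =>
    intro x hx
    have : Vpow K T (i+1) ≤ (Vpow K T (i+1)).comap (s : V →ₗ[K] V) := by
      refine Vpow_succ_le _ fun f hf y hy => ?_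
      have key : s (f y) = f (s y) + (s * f - f * s) y := by
        simp [Module.End.mul_apply]
      simp only [Submodule.mem_comap]
      rw [show (s : V →ₗ[K] V) (f y) = s (f y) from rfl, key]
      exact add_mem (mem_Vpow_succ hf (ih y hy)) (mem_Vpow_succ (hcomm f hf) hy)
    exact this hx
theorem map_one_submodule (Q : Submodule K V) :
    Q.map ((1 : Module.End K V) : V →ₗ[K] V) = Q := Submodule.map_id Q

theorem map_pow_s_le {T : Set (Module.End K V)} {s : Module.End K V}
    (hcomm : ∀ f ∈ T, s * f - f * s ∈ T) (i : ℕ) :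
    ∀ j, (Vpow K T i).map ((s ^ j : Module.End K V) : V →ₗ[K] V) ≤ Vpow K T i
  | 0 => by rw [pow_zero, map_one_submodule]
  | (j+1) => by
    rw [pow_succ, map_mul_apply]
    exact (Submodule.map_mono (Submodule.map_le_iff_le_comap.2
      (fun x hx => Vpow_s_inv hcomm i x hx))).trans (map_pow_s_le hcomm i j)

/-- Key extension lemma: adjoining to a nil-flag set a nilpotent element which
normalizes it (in the bracket sense) again yields a nil-flag set. -/
theorem IsNilFlag.insert {T : Set (Module.End K V)} (hT : IsNilFlag T)
    {s : Module.End K V} (hs : IsNilpotent s)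
    (hcomm : ∀ f ∈ T, s * f - f * s ∈ T) : IsNilFlag (insert s T) := by
  classical
  obtain ⟨N, U, hU0, hUN, hanti, hmap⟩ := hT
  obtain ⟨m₀, hm₀⟩ := hs
  set m := m₀ + 1 with hm
  have hsm : s ^ m = 0 := by rw [hm, pow_succ, hm₀, zero_mul]
  have hmpos : 0 < m := Nat.succ_pos _
  set W : ℕ → Submodule K V := Vpow K T with hW
  have hWbot : ∀ i, N ≤ i → W i = ⊥ := fun i hi =>
    le_bot_iff.1 ((Vpow_le_of_le hi).trans ((Vpow_le_flag hU0 hmap N).trans (hUN N le_rfl).le))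
  -- the combined flag
  set U' : ℕ → Submodule K V :=
    fun k => (W (k / m)).map ((s ^ (k % m) : Module.End K V) : V →ₗ[K] V) ⊔ W (k / m + 1)
    with hU'
  have hWs : ∀ i, ∀ x ∈ W i, s x ∈ W i := fun i => Vpow_s_inv hcomm i
  have hmodlt : ∀ k : ℕ, k % m < m := fun k => Nat.mod_lt _ hmpos
  have hdiv : ∀ k, (k % m + 1 < m → (k+1) / m = k / m ∧ (k+1) % m = k % m + 1) ∧
      (k % m + 1 = m → (k+1) / m = k / m + 1 ∧ (k+1) % m = 0) := by
    intro k
    constructor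
    · intro h
      have hk : k + 1 = m * (k / m) + (k % m + 1) := by
        rw [← add_assoc, Nat.div_add_mod]
      rw [hk, Nat.mul_add_div hmpos, Nat.mul_add_mod]
      rw [Nat.div_eq_of_lt h, Nat.mod_eq_of_lt h]
      simp
    · intro h
      have hk : k + 1 = m * (k / m + 1) := by
        calc k + 1 = m * (k / m) + k % m + 1 := by rw [Nat.div_add_mod]
          _ = m * (k / m) + m := by omega
          _ = m * (k / m + 1) := by rw [Nat.mul_succ]
      rw [hk, Nat.mul_div_cancel_left _ hmpos, Nat.mul_mod_right]
      simp
  -- s shifts the flag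
  have hsU' : ∀ k, (U' k).map (s : V →ₗ[K] V) ≤ U' (k+1) := by
    intro k
    rcases Nat.lt_or_ge (k % m + 1) m with hlt | hge
    · obtain ⟨hd, hmo⟩ := (hdiv k).1 hlt
      simp only [hU', Submodule.map_sup, hd, hmo]
      apply sup_le_sup
      · rw [← map_mul_apply, ← pow_succ']
      · exact Submodule.map_le_iff_le_comap.2 fun x hx => hWs _ x hx
    · have heq : k % m + 1 = m := by have := hmodlt k; omega
      obtain ⟨hd, hmo⟩ := (hdiv k).2 heq
      simp only [hU', Submodule.map_sup, hd, hmo]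
      have h1 : ((W (k / m)).map ((s ^ (k % m) : Module.End K V) : V →ₗ[K] V)).map
          (s : V →ₗ[K] V) = ⊥ := by
        rw [← map_mul_apply, ← pow_succ', heq, hsm]
        exact Submodule.map_zero _
      rw [h1]
      refine sup_le bot_le (le_sup_of_le_left ?_)
      rw [pow_zero, map_one_submodule]
      exact Submodule.map_le_iff_le_comap.2 fun x hx => hWs _ x hx
  -- elements of T shift the flag
  have hTU' : ∀ f ∈ T, ∀ k, (U' k).map (f : V →ₗ[K] V) ≤ U' (k+1) := by
    intro f hf k
    have hWnext : W (k / m + 1) ≤ U' (k + 1) := by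
      rcases Nat.lt_or_ge (k % m + 1) m with hlt | hge
      · obtain ⟨hd, _⟩ := (hdiv k).1 hlt
        simp only [hU', hd]
        exact le_sup_right
      · have heq : k % m + 1 = m := by have := hmodlt k; omega
        obtain ⟨hd, hmo⟩ := (hdiv k).2 heq
        simp only [hU', hd, hmo, pow_zero, map_one_submodule]
        exact le_sup_of_le_left le_rfl
    simp only [hU', Submodule.map_sup]
    apply sup_le
    · refine le_trans ?_ hWnext
      refine Submodule.map_le_iff_le_comap.2 fun x hx => ?_
      exact mem_Vpow_succ hf (map_pow_s_le hcomm (k / m) (k % m) hx)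
    · refine le_trans ?_ hWnext
      exact Submodule.map_le_iff_le_comap.2 fun x hx =>
        (Vpow_succ_le_self _) (mem_Vpow_succ hf hx)
  -- antitone
  have hanti' : ∀ k, U' (k + 1) ≤ U' k := by
    intro k
    rcases Nat.lt_or_ge (k % m + 1) m with hlt | hge
    · obtain ⟨hd, hmo⟩ := (hdiv k).1 hlt
      simp only [hU', hd, hmo]
      refine sup_le_sup ?_ le_rfl
      rw [pow_succ, map_mul_apply]
      exact Submodule.map_mono (Submodule.map_le_iff_le_comap.2 fun x hx => hWs _ x hx)
    · have heq : k % m + 1 = m := by have := hmodlt k; omega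
      obtain ⟨hd, hmo⟩ := (hdiv k).2 heq
      simp only [hU', hd, hmo, pow_zero, map_one_submodule]
      refine sup_le (le_sup_of_le_right le_rfl) (le_sup_of_le_right (Vpow_succ_le_self _))
  refine ⟨N * m, U', ?_, ?_, antitone_nat_of_succ_le hanti', ?_⟩
  · simp only [hU', Nat.zero_div, Nat.zero_mod, pow_zero, map_one_submodule]
    rw [show W 0 = ⊤ from rfl]
    simp
  · intro k hk
    have h1 : N ≤ k / m := (Nat.le_div_iff_mul_le hmpos).2 hk
    simp only [hU', hWbot _ h1, hWbot _ (h1.trans (Nat.le_succ _)), Submodule.map_bot]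
    simp
  · rintro f (rfl | hf) k
    · exact hsU' k
    · exact hTU' f hf k

theorem IsNilFlag.adjoin {T : Set (Module.End K V)} (h : IsNilFlag T) :
    IsNilFlag ((NonUnitalAlgebra.adjoin K T :
      NonUnitalSubalgebra K (Module.End K V)) : Set (Module.End K V)) := by
  obtain ⟨N, U, hU0, hUN, hanti, hmap⟩ := h
  refine ⟨N, U, hU0, hUN, hanti, ?_⟩
  intro f hf
  induction hf using NonUnitalAlgebra.adjoin_induction with
  | mem x hx => exact hmap x hx
  | add x y hx hy px py =>
    intro k
    refine Submodule.map_le_iff_le_comap.2 fun v hv => ?_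
    have : (x + y) v = x v + y v := rfl
    simpa [this] using add_mem (px k ⟨v, hv, rfl⟩) (py k ⟨v, hv, rfl⟩)
  | zero =>
    intro k
    refine Submodule.map_le_iff_le_comap.2 fun v hv => ?_
    simp
  | mul x y hx hy px py =>
    intro k
    rw [map_mul_apply]
    calc ((U k).map (y : V →ₗ[K] V)).map (x : V →ₗ[K] V)
        ≤ (U (k+1)).map (x : V →ₗ[K] V) := Submodule.map_mono (py k)
      _ ≤ U (k+2) := px (k+1)
      _ ≤ U (k+1) := hanti (by omega)
  | smul c x hx px =>
    intro k
    refine Submodule.map_le_iff_le_comap.2 fun v hv => ?_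
    have : (c • x) v = c • (x v) := rfl
    simpa [this] using Submodule.smul_mem _ c (px k ⟨v, hv, rfl⟩)

theorem exists_normal_elt {S : Set (Module.End K V)}
    (hbr : ∀ x ∈ S, ∀ y ∈ S, x * y - y * x ∈ S)
    {B : NonUnitalSubalgebra K (Module.End K V)}
    (hBflag : IsNilFlag (B : Set (Module.End K V)))
    {s : Module.End K V} (hsS : s ∈ S) (hsB : s ∉ B) :
    ∃ s', s' ∈ S ∧ s' ∉ B ∧ ∀ t ∈ S ∩ (B : Set (Module.End K V)), t * s' - s' * t ∈ B := by
  obtain ⟨N, hN⟩ := hBflag.prod_eq_zero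
  set Z : ℕ → Submodule K (Module.End K V) := fun k =>
    Submodule.span K {x | ∃ w1 w2 : List (Module.End K V),
      (∀ f ∈ w1, f ∈ B) ∧ (∀ f ∈ w2, f ∈ B) ∧ w1.length + w2.length = k ∧
        x = w1.prod * s * w2.prod} with hZ
  have hsZ0 : s ∈ Z 0 := Submodule.subset_span ⟨[], [], by simp, by simp, by simp, by simp⟩
  have hstep : ∀ t ∈ (B : Set (Module.End K V)), ∀ k, ∀ x ∈ Z k,
      t * x - x * t ∈ Z (k + 1) := by
    intro t ht k x hx
    have hmaps : Z k ≤ (Z (k+1)).comap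
        (LinearMap.mulLeft K t - LinearMap.mulRight K t) := by
      refine Submodule.span_le.2 ?_
      rintro y ⟨w1, w2, h1, h2, hlen, rfl⟩
      simp only [SetLike.mem_coe, Submodule.mem_comap, LinearMap.sub_apply, LinearMap.mulLeft_apply,
        LinearMap.mulRight_apply]
      refine sub_mem (Submodule.subset_span ⟨t :: w1, w2, ?_, h2, by simp [hlen]; omega, by
          simp [mul_assoc]⟩)
        (Submodule.subset_span ⟨w1, w2 ++ [t], h1, ?_, by simp; omega, by simp [mul_assoc]⟩)
      · intro f hf
        rcases List.mem_cons.1 hf with rfl | hf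
        · exact ht
        · exact h1 f hf
      · intro f hf
        rcases List.mem_append.1 hf with hf | hf
        · exact h2 f hf
        · rw [List.mem_singleton.1 hf]; exact ht
    simpa using hmaps hx
  have hZbot : Z (N + N) ≤ ⊥ := by
    refine Submodule.span_le.2 ?_
    rintro y ⟨w1, w2, h1, h2, hlen, rfl⟩
    have : N ≤ w1.length ∨ N ≤ w2.length := by omega
    rcases this with h | h
    · simp [hN w1 h1 h]
    · simp [hN w2 h2 h]
  have main : ∀ d j, j + d = N + N → ∀ x, x ∈ S → x ∉ B → x ∈ Z j →
      ∃ s', s' ∈ S ∧ s' ∉ B ∧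
        ∀ t ∈ S ∩ (B : Set (Module.End K V)), t * s' - s' * t ∈ B := by
    intro d
    induction d with
    | zero =>
      intro j hj x _ hxB hxZ
      rw [Nat.add_zero] at hj
      subst hj
      exact absurd ((Submodule.mem_bot K).1 (hZbot hxZ) ▸ zero_mem B) hxB
    | succ d ih =>
      intro j hj x hxS hxB hxZ
      by_cases hgood : ∀ t ∈ S ∩ (B : Set (Module.End K V)), t * x - x * t ∈ B
      · exact ⟨x, hxS, hxB, hgood⟩
      · push_neg at hgood
        obtain ⟨t, ⟨htS, htB⟩, hnot⟩ := hgood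
        exact ih (j+1) (by omega) _ (hbr t htS x hxS) hnot (hstep t htB j x hxZ)
  exact main (N + N) 0 (by omega) s hsS hsB hsZ0

theorem comm_extend {S : Set (Module.End K V)}
    {B : NonUnitalSubalgebra K (Module.End K V)}
    (hgen : B = NonUnitalAlgebra.adjoin K (S ∩ (B : Set (Module.End K V))))
    {s' : Module.End K V}
    (h : ∀ t ∈ S ∩ (B : Set (Module.End K V)), t * s' - s' * t ∈ B) :
    ∀ b ∈ (B : Set (Module.End K V)), s' * b - b * s' ∈ B := by
  intro b hb
  have hb' : b ∈ NonUnitalAlgebra.adjoin K (S ∩ (B : Set (Module.End K V))) := hgen ▸ hb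
  clear hb
  have key : b ∈ B ∧ s' * b - b * s' ∈ B := by
    induction hb' using NonUnitalAlgebra.adjoin_induction with
    | mem x hx =>
      refine ⟨hx.2, ?_⟩
      have heq : s' * x - x * s' = -(x * s' - s' * x) := by noncomm_ring
      rw [heq]
      exact neg_mem (h x hx)
    | add x y hx hy px py =>
      refine ⟨add_mem px.1 py.1, ?_⟩
      have heq : s' * (x + y) - (x + y) * s' = (s' * x - x * s') + (s' * y - y * s') := by
        noncomm_ring
      rw [heq]; exact add_mem px.2 py.2
    | zero => exact ⟨zero_mem B, by simpa using zero_mem B⟩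
    | mul x y hx hy px py =>
      refine ⟨mul_mem px.1 py.1, ?_⟩
      have heq : s' * (x * y) - (x * y) * s'
          = (s' * x - x * s') * y + x * (s' * y - y * s') := by noncomm_ring
      rw [heq]
      exact add_mem (mul_mem px.2 py.1) (mul_mem px.1 py.2)
    | smul c x hx px =>
      refine ⟨SMulMemClass.smul_mem c px.1, ?_⟩
      have heq : s' * (c • x) - (c • x) * s' = c • (s' * x - x * s') := by
        rw [mul_smul_comm, smul_mul_assoc, smul_sub]
      rw [heq]
      exact SMulMemClass.smul_mem c px.2
  exact key.2

theorem bot_nilflag : IsNilFlag ((⊥ : NonUnitalSubalgebra K (Module.End K V)) :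
    Set (Module.End K V)) := by
  refine ⟨1, fun k => if k = 0 then ⊤ else ⊥, by simp, ?_, ?_, ?_⟩
  · intro k hk
    simp [Nat.pos_iff_ne_zero.1 hk]
  · refine antitone_nat_of_succ_le fun k => ?_
    simp
  · intro f hf k
    have hf0 : f = 0 := by
      simpa using hf
    subst hf0
    rw [show ((0 : Module.End K V) : V →ₗ[K] V) = 0 from rfl, Submodule.map_zero]
    exact bot_le

theorem jacobson [FiniteDimensional K V] {S : Set (Module.End K V)}
    (hbr : ∀ x ∈ S, ∀ y ∈ S, x * y - y * x ∈ S)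
    (hnil : ∀ x ∈ S, IsNilpotent x) :
    ∀ x ∈ Submodule.span K S, IsNilpotent x := by
  classical
  set Cond : NonUnitalSubalgebra K (Module.End K V) → Prop := fun B =>
    B = NonUnitalAlgebra.adjoin K (S ∩ (B : Set (Module.End K V))) ∧
      IsNilFlag (B : Set (Module.End K V)) with hCond
  set 𝒜 : Set (Submodule K (Module.End K V)) :=
    {p | ∃ B : NonUnitalSubalgebra K (Module.End K V), p = B.toSubmodule ∧ Cond B} with h𝒜
  have h𝒜ne : 𝒜.Nonempty := by
    refine ⟨(⊥ : NonUnitalSubalgebra K (Module.End K V)).toSubmodule, ⊥, rfl, ?_, bot_nilflag⟩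
    refine le_antisymm bot_le (NonUnitalAlgebra.adjoin_le Set.inter_subset_right)
  obtain ⟨p, hp𝒜, hpmax⟩ := set_has_maximal_iff_noetherian.2
    (inferInstance : IsNoetherian K (Module.End K V)) 𝒜 h𝒜ne
  obtain ⟨B, rfl, hBgen, hBflag⟩ := hp𝒜
  -- B contains S
  have hSB : S ⊆ (B : Set (Module.End K V)) := by
    by_contra hnot
    obtain ⟨s, hsS, hsB⟩ := Set.not_subset.1 hnot
    obtain ⟨s', hs'S, hs'B, hs'comm⟩ := exists_normal_elt hbr hBflag hsS hsB
    have hcomm' : ∀ b ∈ (B : Set (Module.End K V)), s' * b - b * s' ∈ B :=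
      comm_extend hBgen hs'comm
    set B' : NonUnitalSubalgebra K (Module.End K V) :=
      NonUnitalAlgebra.adjoin K (insert s' (B : Set (Module.End K V))) with hB'
    have hBB' : (B : Set (Module.End K V)) ⊆ (B' : Set (Module.End K V)) :=
      fun x hx => NonUnitalAlgebra.subset_adjoin K (Set.mem_insert_of_mem _ hx)
    have hs'B' : s' ∈ B' := NonUnitalAlgebra.subset_adjoin K (Set.mem_insert _ _)
    have hB'flag : IsNilFlag (B' : Set (Module.End K V)) :=
      (hBflag.insert (hnil s' hs'S) hcomm').adjoin
    have hB'gen : B' = NonUnitalAlgebra.adjoin K (S ∩ (B' : Set (Module.End K V))) := by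
      refine le_antisymm ?_ (NonUnitalAlgebra.adjoin_le Set.inter_subset_right)
      refine NonUnitalAlgebra.adjoin_le ?_
      rintro x (rfl | hx)
      · exact NonUnitalAlgebra.subset_adjoin K ⟨hs'S, hs'B'⟩
      · have hx' : x ∈ NonUnitalAlgebra.adjoin K (S ∩ (B : Set (Module.End K V))) :=
          hBgen ▸ hx
        exact NonUnitalAlgebra.adjoin_le
          (fun y hy => NonUnitalAlgebra.subset_adjoin K
            (show y ∈ S ∩ (B' : Set (Module.End K V)) from ⟨hy.1, hBB' hy.2⟩)) hx'
    refine hpmax B'.toSubmodule ⟨B', rfl, hB'gen, hB'flag⟩ ?_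
    refine lt_of_le_of_ne (fun x hx => ?_) ?_
    · exact hBB' hx
    · intro heq
      exact hs'B (by
        have : s' ∈ B'.toSubmodule := hs'B'
        rw [← heq] at this
        exact this)
  intro x hx
  have hxB : x ∈ B.toSubmodule := by
    have : Submodule.span K S ≤ B.toSubmodule :=
      Submodule.span_le.2 (fun y hy => hSB hy)
    exact this hx
  exact hBflag.pow_eq_zero hxB

end Jacobson

/-- A finite-dimensional Lie algebra over an algebraically closed field of characteristic
zero which has a very nilpotent basis is solvable. -/
theorem isSolvable_of_veryNilpotentBasis
    {K : Type*} [Field K] [IsAlgClosed K] [CharZero K]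
    {g : Type*} [LieRing g] [LieAlgebra K g] [FiniteDimensional K g]
    (hvnb : ∃ (n : ℕ) (b : Module.Basis (Fin n) K g),
        ∀ z : g, IsIterBracket (⇑b) z → IsNilpotent (LieAlgebra.ad K g z)) :
    LieAlgebra.IsSolvable g := by
  obtain ⟨n, b, hnb⟩ := hvnb
  letI : LieRing (Module.End K g) := LieRing.ofAssociativeRing
  letI : LieAlgebra K (Module.End K g) := LieAlgebra.ofAssociativeAlgebra
  set S : Set (Module.End K g) :=
    (fun z => (LieAlgebra.ad K g z : Module.End K g)) '' {z | IsIterBracket ⇑b z} with hS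
  have hbr : ∀ x ∈ S, ∀ y ∈ S, x * y - y * x ∈ S := by
    rintro _ ⟨u, hu, rfl⟩ _ ⟨v, hv, rfl⟩
    refine ⟨⁅u, v⁆, hu.bracket hv, ?_⟩
    show LieAlgebra.ad K g ⁅u, v⁆ = _
    rw [LieHom.map_lie, Ring.lie_def]
  have hnil : ∀ x ∈ S, IsNilpotent x := by
    rintro _ ⟨u, hu, rfl⟩
    exact hnb u hu
  have hall : ∀ x : g, IsNilpotent (LieAlgebra.ad K g x) := by
    intro x
    have hmem : LieAlgebra.ad K g x ∈ Submodule.span K S := by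
      have hsub : (⊤ : Submodule K g) ≤
          (Submodule.span K S).comap (LieAlgebra.ad K g).toLinearMap := by
        rw [← b.span_eq]
        refine Submodule.span_le.2 ?_
        rintro _ ⟨i, rfl⟩
        exact Submodule.subset_span ⟨b i, IsIterBracket.base i, rfl⟩
      exact hsub trivial
    exact jacobson hbr hnil _ hmem
  have hniL : LieRing.IsNilpotent g := LieAlgebra.isNilpotent_iff_forall.2 hall
  exact LieAlgebra.isSolvable_of_isNilpotent g
end

section
/- Let g be a finite-dimensional Lie algebra over an algebraically closed field K of characteristic 0 and let y_1,…,y_n ∈ g. If every element of the set I(y_1,…,y_n) of iterated brackets of y_1,…,y_n is ad-nilpotent in g, then the Lie subalgebra of g generated by y_1,…,y_n is a nilpotent Lie algebra. -/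
open Submodule Module

attribute [local instance 100] LieRing.ofAssociativeRing

universe uK uV

variable {K : Type uK} [Field K]

/-- The span of a bracket-closed set is bracket-closed. -/
lemma lieSet_span_lie_mem {L : Type*} [LieRing L] [LieAlgebra K L] {S : Set L}
    (hS : ∀ a ∈ S, ∀ b ∈ S, ⁅a, b⁆ ∈ S) {x y : L}
    (hx : x ∈ Submodule.span K S) (hy : y ∈ Submodule.span K S) :
    ⁅x, y⁆ ∈ Submodule.span K S := by
  induction hx using Submodule.span_induction with
  | mem a ha =>
    induction hy using Submodule.span_induction with
    | mem b hb => exact Submodule.subset_span (hS a ha b hb)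
    | zero => simp
    | add b c _ _ hb hc => rw [lie_add]; exact add_mem hb hc
    | smul c b _ hb => rw [lie_smul]; exact Submodule.smul_mem _ _ hb
  | zero => simp
  | add a b _ _ ha hb => rw [add_lie]; exact add_mem ha hb
  | smul c a _ ha => rw [smul_lie]; exact Submodule.smul_mem _ _ ha

/-- Iteration lemma: from nilpotency of the associative algebra spanned by `S`,
get a common null vector reachable from `v`. -/
lemma exists_null_of_pow_bot {V : Type uV} [AddCommGroup V] [Module K V]
    {S : Set (Module.End K V)} {N : ℕ}
    (hN : Submodule.span K S ^ N = ⊥)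
    (P : V → Prop) (hP : ∀ v, P v → ∀ s ∈ S, P (s v))
    {v : V} (hv : v ≠ 0) (hPv : P v) :
    ∃ w, w ≠ 0 ∧ P w ∧ ∀ s ∈ S, s w = 0 := by
  have key : ∀ (m : ℕ) (v : V), (∀ p ∈ Submodule.span K S ^ m, p v = 0) → v ≠ 0 → P v →
      ∃ w, w ≠ 0 ∧ P w ∧ ∀ s ∈ S, s w = 0 := by
    intro m
    induction m with
    | zero =>
      intro v h hv _
      have h1 : (1 : Module.End K V) ∈ Submodule.span K S ^ 0 := by
        rw [pow_zero]
        exact Submodule.one_le.mp le_rfl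
      exact absurd (h 1 h1) hv
    | succ m ih =>
      intro v h hv hPv
      by_cases hall : ∀ s ∈ S, s v = 0
      · exact ⟨v, hv, hPv, hall⟩
      · push_neg at hall
        obtain ⟨s, hs, hsv⟩ := hall
        refine ih (s v) ?_ hsv (hP v hPv s hs)
        intro p hp
        have : p * s ∈ Submodule.span K S ^ (m + 1) :=
          (pow_succ (Submodule.span K S) m).symm ▸
            Submodule.mul_mem_mul hp (Submodule.subset_span hs)
        simpa [Module.End.mul_apply] using h _ this
  refine key N v ?_ hv hPv
  intro p hp
  rw [hN] at hp
  rw [(Submodule.mem_bot K).mp hp]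
  rfl

variable {V : Type uV} [AddCommGroup V] [Module K V]

lemma mapQ_mul {W : Submodule K V} {f g : Module.End K V}
    (hf : W ≤ W.comap f) (hg : W ≤ W.comap g) :
    W.mapQ W (f * g) (fun x hx => hf (hg hx)) = W.mapQ W f hf * W.mapQ W g hg := by
  refine Submodule.linearMap_qext _ ?_
  ext x
  simp [Submodule.mapQ_apply, Module.End.mul_apply]

lemma mapQ_lie {W : Submodule K V} {f g : Module.End K V}
    (hf : W ≤ W.comap f) (hg : W ≤ W.comap g) (h : W ≤ W.comap ⁅f, g⁆) :
    W.mapQ W ⁅f, g⁆ h = ⁅W.mapQ W f hf, W.mapQ W g hg⁆ := by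
  refine Submodule.linearMap_qext _ ?_
  ext x
  simp [Submodule.mapQ_apply, Ring.lie_def, Module.End.mul_apply, Submodule.Quotient.mk_sub]

lemma mapQ_isNilpotent {W : Submodule K V} {f : Module.End K V} (h : W ≤ W.comap f)
    (hf : IsNilpotent f) : IsNilpotent (W.mapQ W f h) := by
  obtain ⟨k, hk⟩ := hf
  refine ⟨k, ?_⟩
  rw [← Submodule.mapQ_pow (p := W) h k]
  refine Submodule.linearMap_qext _ ?_
  ext x
  simp [Submodule.mapQ_apply, hk]

/-- The pushforward to the quotient, as a linear map on an invariant-acting submodule. -/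
def quotPush (W : Submodule K V) (M : Submodule K (Module.End K V))
    (hM : ∀ z ∈ M, W ≤ W.comap z) : ↥M →ₗ[K] Module.End K (V ⧸ W) where
  toFun z := W.mapQ W z.1 (hM z.1 z.2)
  map_add' a b := by
    refine Submodule.linearMap_qext _ ?_
    ext x
    simp [Submodule.mapQ_apply]
  map_smul' c a := by
    refine Submodule.linearMap_qext _ ?_
    ext x
    simp [Submodule.mapQ_apply]

@[simp] lemma quotPush_apply (W : Submodule K V) (M : Submodule K (Module.End K V))
    (hM : ∀ z ∈ M, W ≤ W.comap z) (z : ↥M) :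
    quotPush W M hM z = W.mapQ W z.1 (hM z.1 z.2) := rfl

/-- Every element of the span lifts through the quotient map. -/
lemma span_lift {W : Submodule K V} {S : Set (Module.End K V)}
    (hinv : ∀ z ∈ Submodule.span K S, W ≤ W.comap z)
    {S' : Set (Module.End K (V ⧸ W))}
    (hS' : ∀ s (hs : s ∈ S), W.mapQ W s (hinv s (Submodule.subset_span hs)) ∈ S')
    {b : Module.End K V} (hb : b ∈ Submodule.span K S) :
    ∃ q ∈ Submodule.span K S', W.mkQ.comp b = q.comp W.mkQ := by
  induction hb using Submodule.span_induction with
  | mem s hs =>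
    exact ⟨_, Submodule.subset_span (hS' s hs), (Submodule.mapQ_mkQ (p := W) W s).symm⟩
  | zero => exact ⟨0, Submodule.zero_mem _, by ext x; simp⟩
  | add a b _ _ iha ihb =>
    obtain ⟨qa, hqa, ha'⟩ := iha
    obtain ⟨qb, hqb, hb'⟩ := ihb
    refine ⟨qa + qb, Submodule.add_mem _ hqa hqb, ?_⟩
    ext x
    have h1 := LinearMap.congr_fun ha' x
    have h2 := LinearMap.congr_fun hb' x
    simp only [LinearMap.comp_apply, Submodule.mkQ_apply] at h1 h2
    simp [h1, h2]
  | smul c a _ iha =>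
    obtain ⟨qa, hqa, ha'⟩ := iha
    refine ⟨c • qa, Submodule.smul_mem _ _ hqa, ?_⟩
    ext x
    have h1 := LinearMap.congr_fun ha' x
    simp only [LinearMap.comp_apply, Submodule.mkQ_apply] at h1
    simp [h1]

lemma mapQ_congr {W : Submodule K V} {f g : Module.End K V} (hfg : f = g)
    (hf : W ≤ W.comap f) (hg : W ≤ W.comap g) :
    W.mapQ W f hf = W.mapQ W g hg := by subst hfg; rfl

set_option maxHeartbeats 1000000 in
/-- Jacobson's theorem: a bracket-closed set of nilpotent endomorphisms generates a
nilpotent associative algebra. -/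
theorem jacobson_aux (d : ℕ) :
    ∀ (V : Type (max uK uV)) [AddCommGroup V] [Module K V] [FiniteDimensional K V]
      (S : Set (Module.End K V)),
      (∀ a ∈ S, ∀ b ∈ S, ⁅a, b⁆ ∈ S) → (∀ a ∈ S, IsNilpotent a) →
      Module.finrank K ↥(Submodule.span K S) ≤ d →
      ∃ N, Submodule.span K S ^ N = ⊥ := by
  induction d using Nat.strong_induction_on with
  | _ d IH =>
    -- Step 1: common null vector lemma at level `d`
    have cnv : ∀ (V : Type (max uK uV)) [AddCommGroup V] [Module K V] [FiniteDimensional K V]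
        [Nontrivial V] (S : Set (Module.End K V)),
        (∀ a ∈ S, ∀ b ∈ S, ⁅a, b⁆ ∈ S) → (∀ a ∈ S, IsNilpotent a) →
        Module.finrank K ↥(Submodule.span K S) ≤ d →
        ∃ v : V, v ≠ 0 ∧ ∀ s ∈ S, s v = 0 := by
      intro V _ _ _ _ S hS hnil hrank
      by_cases hbot : Submodule.span K S = ⊥
      · obtain ⟨v, hv⟩ := exists_ne (0 : V)
        refine ⟨v, hv, fun s hs => ?_⟩
        have hs0 : s = 0 := (Submodule.mem_bot K).mp (hbot ▸ Submodule.subset_span hs)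
        simp [hs0]
      · set F : Set ℕ := {e | ∃ T : Set (Module.End K V), T ⊆ S ∧
          (∀ a ∈ T, ∀ b ∈ T, ⁅a, b⁆ ∈ T) ∧ Submodule.span K T < Submodule.span K S ∧
          Module.finrank K ↥(Submodule.span K T) = e} with hF
        have hF0 : 0 ∈ F := by
          refine ⟨∅, by simp, by simp, ?_, by simp [Submodule.span_empty, finrank_bot]⟩
          rw [Submodule.span_empty]
          exact Ne.bot_lt' (Ne.symm hbot)
        have hFbdd : ∀ e ∈ F, e ≤ d := by
          rintro e ⟨T, hTS, -, hlt, rfl⟩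
          exact le_trans (Submodule.finrank_mono hlt.le) hrank
        have heF : sSup F ∈ F := Nat.sSup_mem ⟨0, hF0⟩ ⟨d, fun x hx => hFbdd x hx⟩
        obtain ⟨T, hTS, hTlie, hKlt, hKrank⟩ := heF
        set Kt := Submodule.span K T with hKtdef
        have hKfr : Module.finrank K ↥Kt < Module.finrank K ↥(Submodule.span K S) :=
          Submodule.finrank_lt_finrank_of_lt hKlt
        have hed : sSup F < d := lt_of_lt_of_le (hKrank ▸ hKfr) hrank
        have hKK : ∀ a ∈ Kt, ∀ b ∈ Kt, ⁅a, b⁆ ∈ Kt := fun a ha b hb =>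
          lieSet_span_lie_mem hTlie ha hb
        set adL := (LieAlgebra.ad K (Module.End K V)).toLinearMap with hadL
        have hinvK : ∀ z, z ∈ Kt → Kt ≤ Kt.comap (adL z) := by
          intro z hz k hk
          have : ⁅z, k⁆ ∈ Kt := hKK z hz k hk
          simpa [Submodule.mem_comap, hadL, LieAlgebra.ad_apply] using this
        set adm := Submodule.map adL Kt with hadm
        have hadm_inv : ∀ z ∈ adm, Kt ≤ Kt.comap z := by
          rintro z ⟨k, hk, rfl⟩
          exact hinvK k hk
        set Q : Set (Module.End K (Module.End K V ⧸ Kt)) :=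
          {q | ∃ t, ∃ ht : t ∈ T, q = Kt.mapQ Kt (adL t) (hinvK t (Submodule.subset_span ht))}
          with hQdef
        have hQlie : ∀ a ∈ Q, ∀ b ∈ Q, ⁅a, b⁆ ∈ Q := by
          rintro a ⟨t, ht, rfl⟩ b ⟨t', ht', rfl⟩
          refine ⟨⁅t, t'⁆, hTlie t ht t' ht', ?_⟩
          have hbr : adL ⁅t, t'⁆ = ⁅adL t, adL t'⁆ :=
            (LieAlgebra.ad K (Module.End K V)).map_lie t t'
          have h3 : Kt ≤ Kt.comap ⁅adL t, adL t'⁆ := by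
            rw [← hbr]
            exact hinvK ⁅t, t'⁆ (Submodule.subset_span (hTlie t ht t' ht'))
          rw [mapQ_congr hbr (hinvK ⁅t, t'⁆ (Submodule.subset_span (hTlie t ht t' ht'))) h3]
          exact (mapQ_lie _ _ _).symm
        have hQnil : ∀ a ∈ Q, IsNilpotent a := by
          rintro a ⟨t, ht, rfl⟩
          exact mapQ_isNilpotent _ (LieAlgebra.ad_nilpotent_of_nilpotent (R := K) (hnil t (hTS ht)))
        have hQr : Submodule.span K Q ≤ LinearMap.range (quotPush Kt adm hadm_inv) := by
          rw [Submodule.span_le]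
          rintro q ⟨t, ht, rfl⟩
          exact ⟨⟨adL t, Submodule.mem_map_of_mem (Submodule.subset_span ht)⟩, rfl⟩
        have hQrank : Module.finrank K ↥(Submodule.span K Q) ≤ sSup F := by
          calc Module.finrank K ↥(Submodule.span K Q)
              ≤ Module.finrank K ↥(LinearMap.range (quotPush Kt adm hadm_inv)) :=
                Submodule.finrank_mono hQr
            _ ≤ Module.finrank K ↥adm := LinearMap.finrank_range_le _
            _ ≤ Module.finrank K ↥Kt := Submodule.finrank_map_le adL Kt
            _ = sSup F := hKrank
        obtain ⟨NQ, hNQ⟩ := IH (sSup F) hed (Module.End K V ⧸ Kt) Q hQlie hQnil hQrank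
        obtain ⟨s₀, hs₀S, hs₀K⟩ : ∃ s ∈ S, s ∉ Kt := by
          by_contra h
          push_neg at h
          exact hKlt.not_ge (Submodule.span_le.mpr h)
        obtain ⟨w, hwne, ⟨s, hsS, rfl⟩, hw0⟩ :=
          exists_null_of_pow_bot hNQ (fun x => ∃ u, ∃ _ : u ∈ S, x = Kt.mkQ u)
            (by
              rintro x ⟨u, hu, rfl⟩ q ⟨t, ht, rfl⟩
              refine ⟨⁅t, u⁆, hS t (hTS ht) u hu, ?_⟩
              simp [Submodule.mkQ_apply, Submodule.mapQ_apply, hadL, LieAlgebra.ad_apply])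
            (v := Kt.mkQ s₀)
            (by simpa [Submodule.mkQ_apply, Submodule.Quotient.mk_eq_zero] using hs₀K)
            ⟨s₀, hs₀S, rfl⟩
        have hTs : ∀ t ∈ T, ⁅t, s⁆ ∈ Kt := by
          intro t ht
          have h := hw0 _ ⟨t, ht, rfl⟩
          simpa [Submodule.mkQ_apply, Submodule.mapQ_apply, hadL, LieAlgebra.ad_apply,
            Submodule.Quotient.mk_eq_zero] using h
        have hsK : s ∉ Kt := by
          intro h
          exact hwne (by simpa [Submodule.mkQ_apply, Submodule.Quotient.mk_eq_zero] using h)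
        -- the enlarged space
        set Lsup := Kt ⊔ (K ∙ s) with hLsupdef
        have hsmem : s ∈ Lsup := Submodule.mem_sup_right (Submodule.mem_span_singleton_self s)
        have hKsubLsup : Kt ≤ Lsup := le_sup_left
        have hKts : ∀ k ∈ Kt, ⁅k, s⁆ ∈ Kt := by
          intro k hk
          induction hk using Submodule.span_induction with
          | mem t ht => exact hTs t ht
          | zero => rw [zero_lie]; exact Submodule.zero_mem _
          | add a b _ _ iha ihb => rw [add_lie]; exact Submodule.add_mem _ iha ihb
          | smul c a _ iha => rw [smul_lie]; exact Submodule.smul_mem _ _ iha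
        have hsupbr : ∀ a ∈ Lsup, ∀ b ∈ Lsup, ⁅a, b⁆ ∈ Kt := by
          intro a ha b hb
          obtain ⟨k₁, hk₁, y₁, hy₁, rfl⟩ := Submodule.mem_sup.mp ha
          obtain ⟨k₂, hk₂, y₂, hy₂, rfl⟩ := Submodule.mem_sup.mp hb
          obtain ⟨c₁, rfl⟩ := Submodule.mem_span_singleton.mp hy₁
          obtain ⟨c₂, rfl⟩ := Submodule.mem_span_singleton.mp hy₂
          have h2 : ⁅s, k₂⁆ ∈ Kt := by
            rw [← lie_skew]
            exact Submodule.neg_mem _ (hKts k₂ hk₂)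
          rw [add_lie, lie_add, lie_add]
          refine Submodule.add_mem _ (Submodule.add_mem _ (hKK _ hk₁ _ hk₂) ?_)
            (Submodule.add_mem _ ?_ ?_)
          · rw [lie_smul]; exact Submodule.smul_mem _ _ (hKts k₁ hk₁)
          · rw [smul_lie]; exact Submodule.smul_mem _ _ h2
          · rw [smul_lie, lie_smul, lie_self]
            simp
        have hspan' : Submodule.span K (S ∩ (Lsup : Set (Module.End K V))) = Lsup := by
          refine le_antisymm (Submodule.span_le.mpr Set.inter_subset_right) ?_
          refine sup_le ?_ ?_
          · rw [hKtdef]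
            refine Submodule.span_mono ?_
            intro t ht
            exact ⟨hTS ht, hKsubLsup (Submodule.subset_span ht)⟩
          · rw [Submodule.span_singleton_le_iff_mem]
            exact Submodule.subset_span ⟨hsS, hsmem⟩
        have hLsup_le : Lsup ≤ Submodule.span K S := by
          refine sup_le hKlt.le ?_
          rw [Submodule.span_singleton_le_iff_mem]
          exact Submodule.subset_span hsS
        have hLsup_eq : Lsup = Submodule.span K S := by
          by_contra hne
          have hlt : Lsup < Submodule.span K S := lt_of_le_of_ne hLsup_le hne
          have hmem : Module.finrank K ↥Lsup ∈ F := by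
            refine ⟨S ∩ (Lsup : Set (Module.End K V)), Set.inter_subset_left, ?_, ?_, ?_⟩
            · rintro a ⟨haS, haL⟩ b ⟨hbS, hbL⟩
              exact ⟨hS a haS b hbS, hKsubLsup (hsupbr a haL b hbL)⟩
            · rw [hspan']; exact hlt
            · rw [hspan']
          have hle' : Module.finrank K ↥Lsup ≤ sSup F :=
            le_csSup ⟨d, fun x hx => hFbdd x hx⟩ hmem
          have hKtlt : Kt < Lsup := by
            refine lt_of_le_of_ne hKsubLsup ?_
            intro h
            exact hsK (by rw [h]; exact hsmem)
          have := Submodule.finrank_lt_finrank_of_lt hKtlt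
          omega
        -- common null vector for T
        obtain ⟨NT, hNT⟩ := IH (sSup F) hed V T hTlie (fun a ha => hnil a (hTS ha))
          (le_of_eq hKrank)
        obtain ⟨u, hu⟩ := exists_ne (0 : V)
        obtain ⟨v₀, hv₀, -, hv₀T⟩ := exists_null_of_pow_bot hNT (fun _ => True)
          (fun _ _ _ _ => trivial) hu trivial
        have hKt0 : ∀ k ∈ Kt, ∀ x : V, (∀ t ∈ T, t x = 0) → k x = 0 := by
          intro k hk
          induction hk using Submodule.span_induction with
          | mem t ht => exact fun x hx => hx t ht
          | zero => intro x _; simp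
          | add a b _ _ iha ihb =>
            intro x hx
            rw [LinearMap.add_apply, iha x hx, ihb x hx, add_zero]
          | smul c a _ iha =>
            intro x hx
            rw [LinearMap.smul_apply, iha x hx, smul_zero]
        have hsinv : ∀ x : V, (∀ t ∈ T, t x = 0) → ∀ t ∈ T, t (s x) = 0 := by
          intro x hx t ht
          have hbr : ⁅t, s⁆ x = 0 := hKt0 _ (hTs t ht) x hx
          have e2 : t (s x) - s (t x) = 0 := by
            have : ⁅t, s⁆ x = t (s x) - s (t x) := by
              simp [Ring.lie_def, LinearMap.sub_apply, Module.End.mul_apply]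
            rw [← this]; exact hbr
          rw [hx t ht, map_zero, sub_zero] at e2
          exact e2
        obtain ⟨ks, hks⟩ := hnil s hsS
        have hdesc : ∀ (j : ℕ) (x : V), x ≠ 0 → (∀ t ∈ T, t x = 0) → (s ^ j) x = 0 →
            ∃ w, w ≠ 0 ∧ (∀ t ∈ T, t w = 0) ∧ s w = 0 := by
          intro j
          induction j with
          | zero =>
            intro x hx _ h0
            rw [pow_zero, Module.End.one_apply] at h0
            exact absurd h0 hx
          | succ j ih =>
            intro x hx hxT hsx
            by_cases h0 : s x = 0
            · exact ⟨x, hx, hxT, h0⟩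
            · refine ih (s x) h0 (hsinv x hxT) ?_
              rw [← Module.End.mul_apply, ← pow_succ s j]
              exact hsx
        obtain ⟨w, hwne2, hwT, hws⟩ := hdesc ks v₀ hv₀ hv₀T (by rw [hks]; simp)
        refine ⟨w, hwne2, ?_⟩
        intro z hz
        have hzL : z ∈ Lsup := hLsup_eq ▸ Submodule.subset_span hz
        obtain ⟨k, hk, yy, hyy, rfl⟩ := Submodule.mem_sup.mp hzL
        obtain ⟨c, rfl⟩ := Submodule.mem_span_singleton.mp hyy
        simp [LinearMap.add_apply, LinearMap.smul_apply, hKt0 k hk w hwT, hws]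
    -- Step 2: inner induction on the dimension of the space
    have IL : ∀ (n : ℕ) (V : Type (max uK uV)) [AddCommGroup V] [Module K V]
        [FiniteDimensional K V] (S : Set (Module.End K V)),
        (∀ a ∈ S, ∀ b ∈ S, ⁅a, b⁆ ∈ S) → (∀ a ∈ S, IsNilpotent a) →
        Module.finrank K ↥(Submodule.span K S) ≤ d → Module.finrank K V = n →
        Submodule.span K S ^ n = ⊥ := by
      intro n
      induction n with
      | zero =>
        intro V _ _ _ S _ _ _ hV
        have hsub : Subsingleton V := Module.finrank_zero_iff.mp hV
        have : Subsingleton (Module.End K V) :=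
          ⟨fun a b => LinearMap.ext fun x => Subsingleton.elim _ _⟩
        exact (Submodule.eq_bot_iff _).mpr fun x _ => Subsingleton.elim x 0
      | succ n ihn =>
        intro V _ _ _ S hS hnil hrank hV
        have hfrpos : 0 < Module.finrank K V := by omega
        have hnt : Nontrivial V := Module.nontrivial_of_finrank_pos hfrpos
        obtain ⟨v, hv, hvS⟩ := cnv V S hS hnil hrank
        set W : Submodule K V := K ∙ v with hWdef
        have hWr : Module.finrank K ↥W = 1 := finrank_span_singleton hv
        have hqr : Module.finrank K (V ⧸ W) = n := by
          have := Submodule.finrank_quotient_add_finrank W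
          omega
        have hkillv : ∀ z ∈ Submodule.span K S, z v = 0 := by
          intro z hz
          induction hz using Submodule.span_induction with
          | mem s hs => exact hvS s hs
          | zero => simp
          | add a b _ _ iha ihb => rw [LinearMap.add_apply, iha, ihb, add_zero]
          | smul c a _ iha => rw [LinearMap.smul_apply, iha, smul_zero]
        have hkill : ∀ z ∈ Submodule.span K S, ∀ x ∈ W, z x = 0 := by
          intro z hz x hx
          obtain ⟨c, rfl⟩ := Submodule.mem_span_singleton.mp hx
          rw [map_smul, hkillv z hz, smul_zero]
        have hinv : ∀ z ∈ Submodule.span K S, W ≤ W.comap z := by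
          intro z hz x hx
          rw [Submodule.mem_comap, hkill z hz x hx]
          exact Submodule.zero_mem _
        set S' : Set (Module.End K (V ⧸ W)) :=
          {q | ∃ u, ∃ hu : u ∈ S, q = W.mapQ W u (hinv u (Submodule.subset_span hu))} with hS'def
        have hS'lie : ∀ a ∈ S', ∀ b ∈ S', ⁅a, b⁆ ∈ S' := by
          rintro a ⟨sa, hsa, rfl⟩ b ⟨sb, hsb, rfl⟩
          refine ⟨⁅sa, sb⁆, hS sa hsa sb hsb, ?_⟩
          exact (mapQ_lie _ _ _).symm
        have hS'nil : ∀ a ∈ S', IsNilpotent a := by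
          rintro a ⟨sa, hsa, rfl⟩
          exact mapQ_isNilpotent _ (hnil sa hsa)
        have hS'rank : Module.finrank K ↥(Submodule.span K S') ≤ d := by
          have hr1 : Submodule.span K S' ≤
              LinearMap.range (quotPush W (Submodule.span K S) hinv) := by
            rw [Submodule.span_le]
            rintro q ⟨sq, hsq, rfl⟩
            exact ⟨⟨sq, Submodule.subset_span hsq⟩, rfl⟩
          calc Module.finrank K ↥(Submodule.span K S')
              ≤ Module.finrank K ↥(LinearMap.range (quotPush W (Submodule.span K S) hinv)) :=
                Submodule.finrank_mono hr1
            _ ≤ Module.finrank K ↥(Submodule.span K S) := LinearMap.finrank_range_le _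
            _ ≤ d := hrank
        have hq'eq := ihn (V ⧸ W) S' hS'lie hS'nil hS'rank hqr
        have key : ∀ (m : ℕ) (p : Module.End K V), p ∈ Submodule.span K S ^ m →
            ∃ q ∈ Submodule.span K S' ^ m, W.mkQ.comp p = q.comp W.mkQ := by
          intro m
          induction m with
          | zero =>
            intro p hp
            rw [pow_zero (Submodule.span K S)] at hp
            obtain ⟨c, rfl⟩ := Submodule.mem_one.mp hp
            refine ⟨algebraMap K _ c, by rw [pow_zero (Submodule.span K S')]; exact Submodule.mem_one.mpr ⟨c, rfl⟩, ?_⟩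
            ext x
            simp [Module.algebraMap_end_apply]
          | succ m ihm =>
            intro p hp
            rw [pow_succ (Submodule.span K S) m] at hp
            refine Submodule.mul_induction_on hp ?_ ?_
            · intro a ha b hb
              obtain ⟨qa, hqa, ha'⟩ := ihm a ha
              obtain ⟨qb, hqb, hb'⟩ := span_lift (S' := S') hinv (fun u hu => ⟨u, hu, rfl⟩) hb
              refine ⟨qa * qb,
                (pow_succ (Submodule.span K S') m).symm ▸ Submodule.mul_mem_mul hqa hqb, ?_⟩
              ext x
              have h1 := LinearMap.congr_fun hb' x
              have h2 := LinearMap.congr_fun ha' (b x)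
              simp only [LinearMap.comp_apply, Submodule.mkQ_apply, Module.End.mul_apply] at h1 h2 ⊢
              rw [h2, h1]
            · rintro x y ⟨qx, hqx, hx'⟩ ⟨qy, hqy, hy'⟩
              refine ⟨qx + qy, Submodule.add_mem _ hqx hqy, ?_⟩
              ext u
              have h1 := LinearMap.congr_fun hx' u
              have h2 := LinearMap.congr_fun hy' u
              simp only [LinearMap.comp_apply, Submodule.mkQ_apply, LinearMap.add_apply,
                Submodule.Quotient.mk_add] at h1 h2 ⊢
              rw [h1, h2]
        have hfin : Submodule.span K S * Submodule.span K S ^ n ≤ ⊥ := by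
          rw [Submodule.mul_le]
          intro z hz p hp
          obtain ⟨q, hq, hpq⟩ := key n p hp
          have hq0 : q = 0 := by
            rw [hq'eq] at hq
            exact (Submodule.mem_bot K).mp hq
          rw [Submodule.mem_bot]
          ext u
          have h1 := LinearMap.congr_fun hpq u
          rw [hq0] at h1
          simp only [LinearMap.comp_apply, Submodule.mkQ_apply, LinearMap.zero_apply] at h1
          have hpu : p u ∈ W := (Submodule.Quotient.mk_eq_zero W).mp h1
          simp [Module.End.mul_apply, hkill z hz (p u) hpu]
        rw [pow_succ' (Submodule.span K S) n]
        exact le_bot_iff.mp hfin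
    intro V _ _ _ S hS hnil hrank
    exact ⟨Module.finrank K V, IL (Module.finrank K V) V S hS hnil hrank rfl⟩

/-- Jacobson's theorem, universe-polymorphic version: every element of the span of a
bracket-closed set of nilpotent endomorphisms is nilpotent. -/
theorem jacobson_s8 {V : Type uV} [AddCommGroup V] [Module K V] [FiniteDimensional K V]
    {S : Set (Module.End K V)}
    (hS : ∀ a ∈ S, ∀ b ∈ S, ⁅a, b⁆ ∈ S) (hnil : ∀ a ∈ S, IsNilpotent a)
    {x : Module.End K V} (hx : x ∈ Submodule.span K S) : IsNilpotent x := by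
  let e : V ≃ₗ[K] ULift.{uK} V := ULift.moduleEquiv.symm
  let Φ : Module.End K V ≃ₗ[K] Module.End K (ULift.{uK} V) := e.conj
  have hmul : ∀ f g : Module.End K V, Φ (f * g) = Φ f * Φ g := fun f g =>
    e.conj_comp g f
  have hlie : ∀ f g : Module.End K V, Φ ⁅f, g⁆ = ⁅Φ f, Φ g⁆ := by
    intro f g
    rw [Ring.lie_def, Ring.lie_def, map_sub, hmul, hmul]
  have hpow : ∀ (f : Module.End K V) (k : ℕ), Φ (f ^ k) = Φ f ^ k := by
    intro f k
    induction k with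
    | zero =>
      rw [pow_zero, pow_zero]
      exact e.conj_id ▸ rfl
    | succ k ih => rw [pow_succ, pow_succ, hmul, ih]
  set S' : Set (Module.End K (ULift.{uK} V)) := Φ '' S with hS'def
  have hS'lie : ∀ a ∈ S', ∀ b ∈ S', ⁅a, b⁆ ∈ S' := by
    rintro a ⟨f, hf, rfl⟩ b ⟨g, hg, rfl⟩
    exact ⟨⁅f, g⁆, hS f hf g hg, hlie f g⟩
  have hS'nil : ∀ a ∈ S', IsNilpotent a := by
    rintro a ⟨f, hf, rfl⟩
    obtain ⟨k, hk⟩ := hnil f hf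
    exact ⟨k, by rw [← hpow, hk, map_zero]⟩
  have hspan : Submodule.span K S' = Submodule.map (Φ : Module.End K V →ₗ[K] _)
      (Submodule.span K S) := by
    rw [hS'def, ← LinearEquiv.coe_coe, Submodule.span_image]
  obtain ⟨N, hN⟩ := jacobson_aux (Module.finrank K ↥(Submodule.span K S'))
    (ULift.{uK} V) S' hS'lie hS'nil le_rfl
  have hxm : Φ x ∈ Submodule.span K S' := by
    rw [hspan]
    exact Submodule.mem_map_of_mem hx
  have hxN : Φ x ^ N = 0 := by
    have := Submodule.pow_mem_pow _ hxm N
    rw [hN] at this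
    exact (Submodule.mem_bot K).mp this
  refine ⟨N, ?_⟩
  have : Φ (x ^ N) = 0 := by rw [hpow, hxN]
  have h0 : Φ (x ^ N) = Φ 0 := by rw [this, map_zero]
  exact Φ.injective h0

/-- If all iterated brackets of `y₁, …, yₙ` are ad-nilpotent in a finite-dimensional Lie
algebra over an algebraically closed field of characteristic zero, then the Lie subalgebra
generated by `y₁, …, yₙ` is nilpotent. -/
theorem lieSpan_isNilpotent_of_iterBrackets_adNilpotent
    {K : Type*} [Field K] [IsAlgClosed K] [CharZero K]
    {g : Type*} [LieRing g] [LieAlgebra K g] [FiniteDimensional K g]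
    {n : ℕ} (y : Fin n → g)
    (hy : ∀ z : g, IsIterBracket y z → IsNilpotent (LieAlgebra.ad K g z)) :
    LieRing.IsNilpotent (LieSubalgebra.lieSpan K g (Set.range y)) := by
  set Sg : Set g := {z | IsIterBracket y z} with hSg
  have hSg_lie : ∀ a ∈ Sg, ∀ b ∈ Sg, ⁅a, b⁆ ∈ Sg := fun a ha b hb =>
    IsIterBracket.bracket ha hb
  let A : LieSubalgebra K g :=
    { Submodule.span K Sg with
      lie_mem' := fun {a b} ha hb => lieSet_span_lie_mem hSg_lie ha hb }
  have hle : LieSubalgebra.lieSpan K g (Set.range y) ≤ A := by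
    rw [LieSubalgebra.lieSpan_le]
    rintro _ ⟨i, rfl⟩
    exact Submodule.subset_span (IsIterBracket.base i)
  have hadnil : ∀ x : g, x ∈ LieSubalgebra.lieSpan K g (Set.range y) →
      IsNilpotent (LieAlgebra.ad K g x) := by
    intro x hx
    have hxA : x ∈ Submodule.span K Sg := hle hx
    set adL := (LieAlgebra.ad K g).toLinearMap with hadL
    have hmem : adL x ∈ Submodule.span K (adL '' Sg) := by
      rw [Submodule.span_image]
      exact Submodule.mem_map_of_mem hxA
    refine jacobson_s8 (S := adL '' Sg) ?_ ?_ hmem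
    · rintro a ⟨u, hu, rfl⟩ b ⟨v, hv, rfl⟩
      exact ⟨⁅u, v⁆, hSg_lie u hu v hv, (LieAlgebra.ad K g).map_lie u v⟩
    · rintro a ⟨u, hu, rfl⟩
      exact hy u hu
  rw [LieAlgebra.isNilpotent_iff_forall (R := K)]
  intro x
  exact LieSubalgebra.isNilpotent_ad_of_isNilpotent_ad _ (hadnil x.1 x.2)
end

section
/- Let g be a finite-dimensional Lie algebra over an algebraically closed field K of characteristic 0 and let y_1,…,y_n ∈ g. If every iterated bracket of y_1,…,y_n of depth at least 2 is ad-nilpotent in g, then the Lie subalgebra k of g generated by y_1,…,y_n has nilpotent derived subalgebra [k,k]; in particular, k is solvable. -/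
section Jacobson

open Submodule

variable {K : Type*} [Field K] {V : Type*} [AddCommGroup V] [Module K V]
  [FiniteDimensional K V]

local notation "E" => Module.End K V

omit [FiniteDimensional K V] in
private lemma span_sm (a b : E) :
    (span K {a} : Submodule K E) * span K {b} = span K {a * b} := by
  rw [Submodule.span_mul_span, Set.singleton_mul_singleton]

omit [FiniteDimensional K V] in
private lemma pow_bot_of_le {T : Submodule K E} {a b : ℕ} (h : T ^ a = ⊥) (hab : a ≤ b) :
    T ^ b = ⊥ := by
  obtain ⟨c, rfl⟩ := Nat.exists_eq_add_of_le hab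
  rw [show T ^ (a + c) = T ^ a * T ^ c from pow_add T a c, h, Submodule.bot_mul]

/-- **Jacobson's theorem** for Lie sets: if `S` is a set of nilpotent endomorphisms of a
finite-dimensional vector space that is closed under commutators, then every element of the
span of `S` is nilpotent. -/
theorem isNilpotent_of_mem_span_lieSet (S : Set E)
    (hnil : ∀ z ∈ S, IsNilpotent z)
    (hcl : ∀ a ∈ S, ∀ b ∈ S, a * b - b * a ∈ S) :
    ∀ x ∈ Submodule.span K S, IsNilpotent x := by
  classical
  set dims : Set ℕ :=
    {d | ∃ C : Set E, C ⊆ S ∧ (∃ f : ℕ, (span K C) ^ (f + 1) = ⊥) ∧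
      d = Module.finrank K (span K C)} with hdims
  have hne : dims.Nonempty := by
    refine ⟨Module.finrank K (span K (∅ : Set E)), ∅, by simp, ⟨0, ?_⟩, rfl⟩
    rw [Submodule.span_empty, show (⊥ : Submodule K E) ^ (0 + 1) = ⊥ from pow_one ⊥]
  have hbdd : BddAbove dims := by
    refine ⟨Module.finrank K E, ?_⟩
    rintro d ⟨C, -, -, rfl⟩
    exact Submodule.finrank_le _
  obtain ⟨C, hCS, ⟨f, hf⟩, hd⟩ := Nat.sSup_mem hne hbdd
  have hmax : ∀ C' : Set E, C' ⊆ S → (∃ f' : ℕ, (span K C') ^ (f' + 1) = ⊥) →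
      Module.finrank K (span K C') ≤ Module.finrank K (span K C) := by
    intro C' h1 h2
    rw [← hd]
    exact le_csSup hbdd ⟨C', h1, h2, rfl⟩
  set T : Submodule K E := span K C with hT
  set B : Submodule K E := ⨆ n : ℕ, T ^ (n + 1) with hB
  have hTB : T ≤ B := le_iSup_of_le 0 (le_of_eq (pow_one T).symm)
  have hBB : B * B ≤ B := by
    rw [hB, Submodule.iSup_mul]
    refine iSup_le fun n => ?_
    rw [Submodule.mul_iSup]
    refine iSup_le fun m => ?_
    refine le_iSup_of_le (n + m + 1) (le_of_eq ?_)
    have harith : n + m + 1 + 1 = n + 1 + (m + 1) := by omega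
    rw [harith]
    exact (pow_add T (n + 1) (m + 1)).symm
  have hBpow : ∀ k : ℕ, B ^ (k + 1) ≤ ⨆ n : ℕ, T ^ (n + k + 1) := by
    intro k
    induction k with
    | zero =>
      rw [show B ^ (0 + 1) = B from pow_one B]
    | succ k ih =>
      rw [show B ^ (k + 1 + 1) = B ^ (k + 1) * B from pow_succ B (k + 1)]
      calc B ^ (k + 1) * B ≤ (⨆ n : ℕ, T ^ (n + k + 1)) * B := mul_le_mul' ih le_rfl
        _ ≤ _ := by
          rw [Submodule.iSup_mul]
          refine iSup_le fun n => ?_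
          rw [hB, Submodule.mul_iSup]
          refine iSup_le fun m => ?_
          refine le_iSup_of_le (n + m) (le_of_eq ?_)
          have harith : n + m + (k + 1) + 1 = n + k + 1 + (m + 1) := by omega
          rw [harith]
          exact (pow_add T (n + k + 1) (m + 1)).symm
  have hBf : B ^ (f + 1) = ⊥ := by
    refine le_bot_iff.mp (le_trans (hBpow f) (iSup_le fun n => ?_))
    rw [pow_bot_of_le hf (by omega : f + 1 ≤ n + f + 1)]
  have hSB : S ⊆ (B : Set E) := by
    by_contra hcon
    rw [Set.not_subset] at hcon
    obtain ⟨w₀, hw₀S, hw₀B⟩ := hcon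
    -- Step 1: find w' ∈ S \ B with [C, w'] ⊆ B
    have step1 : ∃ w' ∈ S, w' ∉ B ∧ ∀ c ∈ C, c * w' - w' * c ∈ B := by
      by_contra h
      push_neg at h
      set U : ℕ → Submodule K E := fun m =>
        ⨆ (pq : ℕ × ℕ) (_ : pq.1 + pq.2 = m), T ^ pq.1 * span K {w₀} * T ^ pq.2 with hU
      have hstep : ∀ (c : E), c ∈ C → ∀ (m : ℕ) (w : E), w ∈ U m →
          c * w - w * c ∈ U (m + 1) := by
        intro c hc m w hw
        have hcT : c ∈ T := Submodule.subset_span hc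
        have hle : U m ≤ Submodule.comap (LinearMap.mulLeft K c - LinearMap.mulRight K c)
            (U (m + 1)) := by
          refine iSup_le fun pq => iSup_le fun hpq => ?_
          intro z hz
          simp only [Submodule.mem_comap, LinearMap.sub_apply, LinearMap.mulLeft_apply,
            LinearMap.mulRight_apply]
          refine sub_mem ?_ ?_
          · have h1 : c * z ∈ T * (T ^ pq.1 * span K {w₀} * T ^ pq.2) :=
              Submodule.mul_mem_mul hcT hz
            have h2 : T * (T ^ pq.1 * span K {w₀} * T ^ pq.2)
                = T ^ (pq.1 + 1) * span K {w₀} * T ^ pq.2 := by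
              rw [← mul_assoc, ← mul_assoc, ← show T ^ (pq.1 + 1) = T * T ^ pq.1
                from pow_succ' T pq.1]
            rw [h2] at h1
            have harith : pq.1 + 1 + pq.2 = m + 1 := by omega
            exact Submodule.mem_iSup_of_mem ((pq.1 + 1, pq.2) : ℕ × ℕ)
              (Submodule.mem_iSup_of_mem harith h1)
          · have h1 : z * c ∈ (T ^ pq.1 * span K {w₀} * T ^ pq.2) * T :=
              Submodule.mul_mem_mul hz hcT
            have h2 : (T ^ pq.1 * span K {w₀} * T ^ pq.2) * T
                = T ^ pq.1 * span K {w₀} * T ^ (pq.2 + 1) := by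
              rw [mul_assoc, ← show T ^ (pq.2 + 1) = T ^ pq.2 * T from pow_succ T pq.2]
            rw [h2] at h1
            have harith : pq.1 + (pq.2 + 1) = m + 1 := by omega
            exact Submodule.mem_iSup_of_mem ((pq.1, pq.2 + 1) : ℕ × ℕ)
              (Submodule.mem_iSup_of_mem harith h1)
        have := hle hw
        simpa only [Submodule.mem_comap, LinearMap.sub_apply, LinearMap.mulLeft_apply,
          LinearMap.mulRight_apply] using this
      have key : ∀ m : ℕ, ∃ w ∈ S, w ∉ B ∧ w ∈ U m := by
        intro m
        induction m with
        | zero =>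
          refine ⟨w₀, hw₀S, hw₀B, ?_⟩
          refine Submodule.mem_iSup_of_mem ((0, 0) : ℕ × ℕ) (Submodule.mem_iSup_of_mem rfl ?_)
          rw [show (T ^ 0 * span K {w₀} * T ^ 0 : Submodule K E) = span K {w₀} by
            rw [show T ^ 0 = (1 : Submodule K E) from pow_zero T, Submodule.one_mul,
              Submodule.mul_one]]
          exact Submodule.mem_span_singleton_self w₀
        | succ m ih =>
          obtain ⟨w, hwS, hwB, hwU⟩ := ih
          obtain ⟨c, hcC, hcB⟩ := h w hwS hwB
          exact ⟨c * w - w * c, hcl c (hCS hcC) w hwS, hcB, hstep c hcC m w hwU⟩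
      obtain ⟨w, -, hwB, hwU⟩ := key (2 * f + 2)
      have hUbot : U (2 * f + 2) = ⊥ := by
        refine le_bot_iff.mp (iSup_le fun pq => iSup_le fun hpq => ?_)
        rcases (by omega : f + 1 ≤ pq.1 ∨ f + 1 ≤ pq.2) with hp | hq
        · rw [pow_bot_of_le hf hp, Submodule.bot_mul, Submodule.bot_mul]
        · rw [pow_bot_of_le hf hq, Submodule.mul_bot]
      rw [hUbot, Submodule.mem_bot] at hwU
      exact hwB (hwU ▸ B.zero_mem)
    obtain ⟨w', hw'S, hw'B, hCw'⟩ := step1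
    -- Step 2: commutation facts
    have hwT : ∀ t ∈ T, w' * t - t * w' ∈ B := by
      intro t ht
      have hle : T ≤ Submodule.comap (LinearMap.mulLeft K w' - LinearMap.mulRight K w') B := by
        rw [hT, Submodule.span_le]
        intro c hc
        simp only [SetLike.mem_coe, Submodule.mem_comap, LinearMap.sub_apply,
          LinearMap.mulLeft_apply, LinearMap.mulRight_apply]
        simpa using neg_mem (hCw' c hc)
      have := hle ht
      simpa only [Submodule.mem_comap, LinearMap.sub_apply, LinearMap.mulLeft_apply,
        LinearMap.mulRight_apply] using this
    have hwB : ∀ b ∈ B, w' * b - b * w' ∈ B := by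
      have hn : ∀ n : ℕ, ∀ b ∈ T ^ (n + 1), w' * b - b * w' ∈ B := by
        intro n
        induction n with
        | zero =>
          intro b hb
          rw [show T ^ (0 + 1) = T from pow_one T] at hb
          exact hwT b hb
        | succ n ih =>
          intro b hb
          rw [show T ^ (n + 1 + 1) = T * T ^ (n + 1) from pow_succ' T (n + 1)] at hb
          induction hb using Submodule.mul_induction_on' with
          | mem_mul_mem t ht b' hb' =>
            have hkey : w' * (t * b') - (t * b') * w'
                = (w' * t - t * w') * b' + t * (w' * b' - b' * w') := by noncomm_ring
            rw [hkey]
            refine add_mem (hBB (Submodule.mul_mem_mul (hwT t ht)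
              (le_iSup (fun n : ℕ => T ^ (n + 1)) n hb')))
              (hBB (Submodule.mul_mem_mul (hTB ht) (ih b' hb')))
          | add x hx' y hy' hx hy =>
            have : w' * (x + y) - (x + y) * w'
                = (w' * x - x * w') + (w' * y - y * w') := by noncomm_ring
            rw [this]; exact add_mem hx hy
      intro b hb
      have hle : B ≤ Submodule.comap (LinearMap.mulLeft K w' - LinearMap.mulRight K w') B := by
        refine iSup_le fun n => ?_
        intro z hz
        simp only [Submodule.mem_comap, LinearMap.sub_apply, LinearMap.mulLeft_apply,
          LinearMap.mulRight_apply]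
        exact hn n z hz
      have := hle hb
      simpa only [Submodule.mem_comap, LinearMap.sub_apply, LinearMap.mulLeft_apply,
        LinearMap.mulRight_apply] using this
    set P : Submodule K E := ⨆ q : ℕ, B * span K {w' ^ q} with hP
    have hqP : ∀ q : ℕ, B * span K {w' ^ q} ≤ P := by
      intro q; rw [hP]; exact le_iSup (fun q : ℕ => B * span K {w' ^ q}) q
    have hBP : B ≤ P := by
      refine le_trans (le_of_eq ?_) (hqP 0)
      rw [show w' ^ 0 = (1 : E) from pow_zero w', ← Submodule.one_eq_span, Submodule.mul_one]
    have hswB : span K {w'} * B ≤ B * span K {w'} ⊔ B := by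
      rw [Submodule.mul_le]
      intro m hm b hb
      obtain ⟨a, rfl⟩ := Submodule.mem_span_singleton.mp hm
      have : a • w' * b = a • ((w' * b - b * w') + b * w') := by
        rw [smul_mul_assoc]; congr 1; simp
      rw [this, smul_add]
      refine add_mem ?_ ?_
      · exact Submodule.mem_sup_right (Submodule.smul_mem _ a (hwB b hb))
      · exact Submodule.mem_sup_left (Submodule.smul_mem _ a
          (Submodule.mul_mem_mul hb (Submodule.mem_span_singleton_self w')))
    have hwP : span K {w'} * P ≤ P := by
      rw [hP, Submodule.mul_iSup]
      refine iSup_le fun q => ?_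
      calc span K {w'} * (B * span K {w' ^ q})
          = (span K {w'} * B) * span K {w' ^ q} := by rw [mul_assoc]
        _ ≤ (B * span K {w'} ⊔ B) * span K {w' ^ q} := mul_le_mul' hswB le_rfl
        _ = B * span K {w' ^ (q + 1)} ⊔ B * span K {w' ^ q} := by
            rw [Submodule.sup_mul, mul_assoc, span_sm,
              ← show w' ^ (q + 1) = w' * w' ^ q from pow_succ' w' q]
        _ ≤ P := sup_le (hqP (q + 1)) (hqP q)
    have hqPmul : ∀ q : ℕ, span K {w' ^ q} * P ≤ P := by
      intro q
      induction q with
      | zero => rw [show w' ^ 0 = (1 : E) from pow_zero w', ← Submodule.one_eq_span,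
          Submodule.one_mul]
      | succ q ih =>
        rw [show w' ^ (q + 1) = w' * w' ^ q from pow_succ' w' q, ← span_sm, mul_assoc]
        exact le_trans (mul_le_mul' le_rfl ih) hwP
    have hBPmul : B * P ≤ P := by
      rw [hP, Submodule.mul_iSup]
      refine iSup_le fun q => ?_
      rw [← mul_assoc]
      exact le_trans (mul_le_mul' hBB le_rfl) (hqP q)
    set T' : Submodule K E := span K (insert w' C) with hT'
    have hT'span : T' = span K {w'} ⊔ T := by rw [hT', Submodule.span_insert]
    have hT'P : T' * P ≤ P := by
      rw [hT'span, Submodule.sup_mul]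
      exact sup_le hwP (le_trans (mul_le_mul' hTB le_rfl) hBPmul)
    have claim1 : ∀ m : ℕ, T' ^ (m + 1) ≤ P ⊔ span K {w' ^ (m + 1)} := by
      intro m
      induction m with
      | zero =>
        rw [show T' ^ (0 + 1) = T' from pow_one T', hT'span]
        refine sup_le ?_ (le_trans hTB (le_trans hBP le_sup_left))
        rw [show w' ^ (0 + 1) = w' from pow_one w']
        exact le_sup_right
      | succ m ih =>
        rw [show T' ^ (m + 1 + 1) = T' * T' ^ (m + 1) from pow_succ' T' (m + 1)]
        calc T' * T' ^ (m + 1) ≤ T' * (P ⊔ span K {w' ^ (m + 1)}) :=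
              mul_le_mul' le_rfl ih
          _ = T' * P ⊔ T' * span K {w' ^ (m + 1)} := by rw [Submodule.mul_sup]
          _ ≤ P ⊔ span K {w' ^ (m + 1 + 1)} := by
              refine sup_le (le_trans hT'P le_sup_left) ?_
              rw [hT'span, Submodule.sup_mul]
              refine sup_le (le_of_eq ?_ |>.trans le_sup_right) ?_
              · rw [span_sm, ← show w' ^ (m + 2) = w' * w' ^ (m + 1) from pow_succ' w' (m + 1)]
              · refine le_trans ?_ le_sup_left
                exact le_trans (mul_le_mul' hTB le_rfl) (hqP (m + 1))
    obtain ⟨e, he⟩ := hnil w' hw'S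
    have hT'e : T' ^ (e + 1) ≤ P := by
      refine le_trans (claim1 e) (sup_le le_rfl ?_)
      have : w' ^ (e + 1) = 0 := by rw [pow_succ, he, zero_mul]
      rw [this, Submodule.span_zero_singleton]
      exact bot_le
    have claim2 : ∀ k : ℕ, P ^ (k + 1) ≤ ⨆ q : ℕ, B ^ (k + 1) * span K {w' ^ q} := by
      intro k
      induction k with
      | zero =>
        rw [show P ^ (0 + 1) = P from pow_one P, hP]
        refine iSup_le fun q => le_iSup_of_le q (le_of_eq ?_)
        rw [show B ^ (0 + 1) = B from pow_one B]
      | succ k ih =>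
        rw [show P ^ (k + 1 + 1) = P ^ (k + 1) * P from pow_succ P (k + 1)]
        calc P ^ (k + 1) * P ≤ (⨆ q : ℕ, B ^ (k + 1) * span K {w' ^ q}) * P :=
              mul_le_mul' ih le_rfl
          _ ≤ _ := by
            rw [Submodule.iSup_mul]
            refine iSup_le fun q => ?_
            calc B ^ (k + 1) * span K {w' ^ q} * P
                = B ^ (k + 1) * (span K {w' ^ q} * P) := by rw [mul_assoc]
              _ ≤ B ^ (k + 1) * P := mul_le_mul' le_rfl (hqPmul q)
              _ ≤ _ := by
                rw [hP, Submodule.mul_iSup]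
                refine iSup_le fun q' => le_iSup_of_le q' (le_of_eq ?_)
                rw [← mul_assoc, ← show B ^ (k + 1 + 1) = B ^ (k + 1) * B from pow_succ B (k + 1)]
    have hPf : P ^ (f + 1) = ⊥ := by
      refine le_bot_iff.mp (le_trans (claim2 f) (iSup_le fun q => ?_))
      rw [hBf, Submodule.bot_mul]
    have hT'nil : T' ^ ((e + 1) * (f + 1)) = ⊥ := by
      refine le_bot_iff.mp ?_
      calc T' ^ ((e + 1) * (f + 1)) = (T' ^ (e + 1)) ^ (f + 1) := pow_mul T' (e + 1) (f + 1)
        _ ≤ P ^ (f + 1) := pow_le_pow_left' hT'e (f + 1)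
        _ = ⊥ := hPf
    have hfinal := hmax (insert w' C) (Set.insert_subset hw'S hCS)
      ⟨(e + 1) * (f + 1) - 1, by
        have hpos : 0 < (e + 1) * (f + 1) := Nat.mul_pos (by omega) (by omega)
        rw [show (e + 1) * (f + 1) - 1 + 1 = (e + 1) * (f + 1) by omega]
        exact hT'nil⟩
    have hlt : T < T' := by
      refine lt_of_le_of_ne ?_ ?_
      · rw [hT'span]; exact le_sup_right
      · intro heq
        exact hw'B (hTB (heq ▸ Submodule.subset_span (Set.mem_insert w' C)))
    exact absurd hfinal (not_le.mpr (Submodule.finrank_lt_finrank_of_lt hlt))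
  intro x hx
  have hxB : x ∈ B := (Submodule.span_le.mpr hSB) hx
  refine ⟨f + 1, ?_⟩
  have h2 : x ^ (f + 1) ∈ B ^ (f + 1) := Submodule.pow_mem_pow (M := B) hxB (f + 1)
  rwa [hBf, Submodule.mem_bot] at h2

end Jacobson

/-- `IterBracketDepth y z d` means that `z` is an iterated bracket of the `y i` of depth
`d`: each `y i` is an iterated bracket of depth `1`, and if `u`, `v` are iterated brackets
of depths `du`, `dv`, then `⁅u, v⁆` is an iterated bracket of depth `max du dv + 1`. -/
inductive IterBracketDepth {g : Type*} [LieRing g] {n : ℕ} (y : Fin n → g) : g → ℕ → Prop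
  | base (i : Fin n) : IterBracketDepth y (y i) 1
  | bracket {u v : g} {du dv : ℕ} : IterBracketDepth y u du → IterBracketDepth y v dv →
      IterBracketDepth y ⁅u, v⁆ (max du dv + 1)

private theorem IterBracketDepth.one_le {g : Type*} [LieRing g] {n : ℕ} {y : Fin n → g}
    {z : g} {d : ℕ} (h : IterBracketDepth y z d) : 1 ≤ d := by
  induction h with
  | base i => exact le_refl 1
  | bracket h1 h2 ih1 ih2 => omega

/-- If every iterated bracket of `y₁, …, yₙ` of depth at least `2` is ad-nilpotent in a
finite-dimensional Lie algebra over an algebraically closed field of characteristic zero,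
then the Lie subalgebra `k` generated by `y₁, …, yₙ` has nilpotent derived subalgebra
`[k, k]`; in particular `k` is solvable. -/
theorem derived_isNilpotent_of_deep_iterBrackets_adNilpotent
    {K : Type*} [Field K] [IsAlgClosed K] [CharZero K]
    {g : Type*} [LieRing g] [LieAlgebra K g] [FiniteDimensional K g]
    {n : ℕ} (y : Fin n → g)
    (hy : ∀ (z : g) (d : ℕ), IterBracketDepth y z d → 2 ≤ d →
        IsNilpotent (LieAlgebra.ad K g z)) :
    LieModule.IsNilpotent
        (LieAlgebra.derivedSeries K (LieSubalgebra.lieSpan K g (Set.range y)) 1)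
        (LieAlgebra.derivedSeries K (LieSubalgebra.lieSpan K g (Set.range y)) 1) ∧
      LieAlgebra.IsSolvable (LieSubalgebra.lieSpan K g (Set.range y)) := by
  classical
  set k : LieSubalgebra K g := LieSubalgebra.lieSpan K g (Set.range y) with hk
  set Itb : Set g := {z | ∃ d, IterBracketDepth y z d} with hItb
  set Deep : Set g := {z | ∃ d, 2 ≤ d ∧ IterBracketDepth y z d} with hDeep
  have hDeepCl : ∀ u ∈ Deep, ∀ v ∈ Deep, ⁅u, v⁆ ∈ Deep := by
    rintro u ⟨du, hdu2, hdu⟩ v ⟨dv, hdv2, hdv⟩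
    exact ⟨max du dv + 1, by omega, hdu.bracket hdv⟩
  have hDeepItb : Deep ⊆ Itb := by rintro z ⟨d, -, hd⟩; exact ⟨d, hd⟩
  -- brackets of elements of `span Itb` land in `span Deep`
  have step1 : ∀ u ∈ Itb, ∀ v ∈ Submodule.span K Itb, ⁅u, v⁆ ∈ Submodule.span K Deep := by
    intro u hu v hv
    induction hv using Submodule.span_induction with
    | mem w hw =>
      obtain ⟨du, hdu⟩ := hu
      obtain ⟨dw, hdw⟩ := hw
      have := hdu.one_le
      have := hdw.one_le
      exact Submodule.subset_span ⟨max du dw + 1, by omega, hdu.bracket hdw⟩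
    | zero => rw [lie_zero]; exact Submodule.zero_mem _
    | add a b _ _ ha hb => rw [lie_add]; exact Submodule.add_mem _ ha hb
    | smul t a _ ha => rw [lie_smul]; exact Submodule.smul_mem _ t ha
  have hbr : ∀ u ∈ Submodule.span K Itb, ∀ v ∈ Submodule.span K Itb,
      ⁅u, v⁆ ∈ Submodule.span K Deep := by
    intro u hu v hv
    induction hu using Submodule.span_induction with
    | mem w hw => exact step1 w hw v hv
    | zero => rw [zero_lie]; exact Submodule.zero_mem _
    | add a b _ _ ha hb => rw [add_lie]; exact Submodule.add_mem _ ha hb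
    | smul t a _ ha => rw [smul_lie]; exact Submodule.smul_mem _ t ha
  -- `span Itb` is a Lie subalgebra containing the `y i`, so it contains `k`
  have hkle : k.toSubmodule ≤ Submodule.span K Itb := by
    let A : LieSubalgebra K g :=
      { toSubmodule := Submodule.span K Itb
        lie_mem' := fun {x y'} hx hy' =>
          Submodule.span_mono hDeepItb (hbr x hx y' hy') }
    have hA : k ≤ A := by
      rw [hk]
      apply LieSubalgebra.lieSpan_le.mpr
      rintro z ⟨i, rfl⟩
      exact Submodule.subset_span ⟨1, IterBracketDepth.base i⟩
    exact hA
  -- every element of the derived subalgebra of `k` lies in `span Deep` (in `g`)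
  have hD : ∀ x : k, x ∈ LieAlgebra.derivedSeries K k 1 → (x : g) ∈ Submodule.span K Deep := by
    intro x hx
    have h2 : (⁅(⊤ : LieIdeal K k), (⊤ : LieIdeal K k)⁆ : LieIdeal K k).toSubmodule ≤
        (Submodule.span K Deep).comap (k.toSubmodule.subtype) := by
      rw [LieSubmodule.lieIdeal_oper_eq_linear_span, Submodule.span_le]
      rintro m ⟨a, b, rfl⟩
      have ha : (((a : k) : k) : g) ∈ Submodule.span K Itb := hkle (a : k).2
      have hb : (((b : k) : k) : g) ∈ Submodule.span K Itb := hkle (b : k).2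
      show (k.toSubmodule.subtype) ⁅((a : k) : k), ((b : k) : k)⁆ ∈ Submodule.span K Deep
      have hco : (k.toSubmodule.subtype) ⁅((a : k) : k), ((b : k) : k)⁆
          = ⁅(((a : k) : k) : g), (((b : k) : k) : g)⁆ := rfl
      rw [hco]
      exact hbr _ ha _ hb
    exact h2 hx
  -- elements of `span Deep` are ad-nilpotent in `g`
  have hadg : ∀ z ∈ Submodule.span K Deep, IsNilpotent (LieAlgebra.ad K g z) := by
    intro z hz
    letI : LieRing (Module.End K g) := LieRing.ofAssociativeRing
    have key := isNilpotent_of_mem_span_lieSet (K := K) (V := g)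
      ((LieAlgebra.ad K g : g →ₗ⁅K⁆ Module.End K g) '' Deep)
      (by rintro _ ⟨w, ⟨d, hd2, hdep⟩, rfl⟩; exact hy w d hdep hd2)
      (by
        rintro _ ⟨u, hu, rfl⟩ _ ⟨v, hv, rfl⟩
        refine ⟨⁅u, v⁆, hDeepCl u hu v hv, ?_⟩
        rw [LieHom.map_lie]
        rfl)
    refine key _ ?_
    have : LieAlgebra.ad K g z ∈ (Submodule.span K Deep).map
        (LieAlgebra.ad K g : g →ₗ⁅K⁆ Module.End K g).toLinearMap :=
      Submodule.mem_map_of_mem hz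
    rwa [Submodule.map_span] at this
  -- the derived subalgebra is nilpotent (Engel)
  have hnilD : LieModule.IsNilpotent (LieAlgebra.derivedSeries K k 1)
      (LieAlgebra.derivedSeries K k 1) := by
    refine (LieAlgebra.isNilpotent_iff_forall (R := K)).mpr ?_
    intro x
    have h1 : IsNilpotent (LieAlgebra.ad K g ((x : k) : g)) := hadg _ (hD (x : k) x.2)
    have h2 : IsNilpotent (LieAlgebra.ad K k (x : k)) :=
      k.isNilpotent_ad_of_isNilpotent_ad h1
    exact LieSubalgebra.isNilpotent_ad_of_isNilpotent_ad
      (LieIdeal.toLieSubalgebra K k (LieAlgebra.derivedSeries K k 1)) (x := x) h2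
  refine ⟨hnilD, ?_⟩
  haveI := hnilD
  haveI : LieAlgebra.IsSolvable (LieAlgebra.derivedSeries K k 1) := inferInstance
  obtain ⟨m, hm⟩ := (LieAlgebra.isSolvable_iff K _).mp this
  rw [LieIdeal.derivedSeries_eq_bot_iff] at hm
  refine (LieAlgebra.isSolvable_iff K _).mpr ⟨m + 1, ?_⟩
  have h4 : LieAlgebra.derivedSeries K k (m + 1)
      = LieAlgebra.derivedSeriesOfIdeal K k m (LieAlgebra.derivedSeries K k 1) := by
    rw [LieAlgebra.derivedSeries_def,
      LieAlgebra.derivedSeriesOfIdeal_add (R := K) (L := k) (I := ⊤) m 1]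
  rw [h4, hm]
end
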